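/- arXiv:0907.0314 — 2 statements merged into one kernel-verified Lean document; each statement's English description precedes it below -/
import Mathlib

section
/- Let 𝕊 be the collection of subsets of ℝ̂ consisting of all closed convex subsets of ℝ̂, all open intervals (x,y) with x, y ∈ ℝ and x < y, and the open interval (−∞, +∞) = ℝ. Let I be an ideal of M₂(ℝ̄). Then there exists I' ∈ 𝕊 such that for all X ∈ M₂(ℝ̄): X ∈ I if and only if PC(X) embeds isometrically into I'. Moreover, I' is unique up to isometry. -/
open scoped Classical ENNReal

/-- The tropical semiring `ℝ̄ = ℝ ∪ {-∞}`, carried by `WithBot ℝ`;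
tropical addition is `max` and tropical multiplication is `+`. -/
abbrev Rb : Type := WithBot ℝ

/-- Tropical matrix multiplication. -/
noncomputable def tMul {n : ℕ} (A B : Fin n → Fin n → Rb) : Fin n → Fin n → Rb :=
  fun i j => Finset.univ.sup fun k => A i k + B k j

/-- The column space of a matrix: all tropical linear combinations of its columns. -/
def ColSpace {n : ℕ} (A : Fin n → Fin n → Rb) : Set (Fin n → Rb) :=
  {v | ∃ c : Fin n → Rb, ∀ i, v i = Finset.univ.sup fun j => c j + A i j}

/-- The row space of a matrix: all tropical linear combinations of its rows. -/
def RowSpace {n : ℕ} (A : Fin n → Fin n → Rb) : Set (Fin n → Rb) :=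
  {v | ∃ c : Fin n → Rb, ∀ j, v j = Finset.univ.sup fun i => c i + A i j}

abbrev Mat2 : Type := Fin 2 → Fin 2 → Rb

/-- Inclusion of `ℝ̄` into the projective line `ℝ̂ = ℝ ∪ {-∞, +∞}` (modelled by `EReal`). -/
noncomputable def toE : Rb → EReal := WithBot.recBotCoe ⊥ (fun r : ℝ => (r : EReal))

/-- Projection of a vector `(a, b)` to `b - a ∈ ℝ̂`. -/
noncomputable def projPt (v : Fin 2 → Rb) : EReal := toE (v 1) - toE (v 0)

def zeroVec : Fin 2 → Rb := fun _ => ⊥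

/-- Projective column space. -/
noncomputable def PC (A : Mat2) : Set EReal :=
  {z | ∃ v ∈ ColSpace A, v ≠ zeroVec ∧ projPt v = z}

/-- Projective row space. -/
noncomputable def PR (A : Mat2) : Set EReal :=
  {z | ∃ v ∈ RowSpace A, v ≠ zeroVec ∧ projPt v = z}

/-- The metric `δ` on `ℝ̂`. -/
noncomputable def delta (x y : EReal) : ℝ≥0∞ :=
  if (∃ a : ℝ, x = (a : EReal)) ∧ (∃ b : ℝ, y = (b : EReal)) then
    ENNReal.ofReal |x.toReal - y.toReal|
  else if x = y then 0 else ⊤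

/-- `M` embeds isometrically into `N`. -/
def IsomEmbed (M N : Set EReal) : Prop :=
  ∃ f : EReal → EReal, Set.MapsTo f M N ∧ Set.InjOn f M ∧
    ∀ x ∈ M, ∀ y ∈ M, delta (f x) (f y) = delta x y

/-- `M` and `N` are isometric. -/
def Isom (M N : Set EReal) : Prop :=
  ∃ f : EReal → EReal, Set.BijOn f M N ∧
    ∀ x ∈ M, ∀ y ∈ M, delta (f x) (f y) = delta x y

/-- Closed convex subsets of `ℝ̂`: the empty set, singletons and closed intervals. -/
def IsClosedConvex (S : Set EReal) : Prop :=
  S = ∅ ∨ ∃ x y : EReal, x ≤ y ∧ S = Set.Icc x y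

/-- An ideal of the monoid of `2 × 2` tropical matrices. -/
noncomputable def IsIdeal (I : Set Mat2) : Prop :=
  I.Nonempty ∧ ∀ A ∈ I, ∀ X Y : Mat2, tMul (tMul X A) Y ∈ I

/-- The collection `𝕊`: all closed convex subsets of `ℝ̂`, all finite open intervals with
real endpoints, and the open interval `(-∞, +∞)`. -/
def SS : Set (Set EReal) :=
  {S | IsClosedConvex S ∨ (∃ x y : ℝ, x < y ∧ S = Set.Ioo (x : EReal) (y : EReal)) ∨
    S = Set.Ioo (⊥ : EReal) ⊤}

noncomputable section

/-! ### Basic helpers -/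

def mat0 : Mat2 := fun _ _ => ⊥

lemma sup2 (f : Fin 2 → Rb) : Finset.univ.sup f = f 0 ⊔ f 1 := by
  rw [show (Finset.univ : Finset (Fin 2)) = {0, 1} from rfl]
  simp [Finset.sup_insert]

lemma tMul_apply (A B : Mat2) (i j : Fin 2) :
    tMul A B i j = (A i 0 + B 0 j) ⊔ (A i 1 + B 1 j) := by
  unfold tMul; rw [sup2]

lemma vec_ext_iff {v w : Fin 2 → Rb} : v = w ↔ v 0 = w 0 ∧ v 1 = w 1 := by
  constructor
  · rintro rfl; exact ⟨rfl, rfl⟩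
  · rintro ⟨h0, h1⟩; funext i; fin_cases i <;> assumption

lemma mat_ext_iff {A B : Mat2} :
    A = B ↔ (A 0 0 = B 0 0 ∧ A 0 1 = B 0 1) ∧ (A 1 0 = B 1 0 ∧ A 1 1 = B 1 1) := by
  constructor
  · rintro rfl; exact ⟨⟨rfl, rfl⟩, ⟨rfl, rfl⟩⟩
  · rintro ⟨⟨h1, h2⟩, ⟨h3, h4⟩⟩; funext i j
    fin_cases i <;> fin_cases j <;> assumption

lemma ne_zeroVec_iff {v : Fin 2 → Rb} : v ≠ zeroVec ↔ v 0 ≠ ⊥ ∨ v 1 ≠ ⊥ := by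
  rw [Ne, vec_ext_iff]
  simp only [zeroVec]
  tauto

lemma tMul_mat0_left (A : Mat2) : tMul mat0 A = mat0 := by
  funext i j; simp [tMul_apply, mat0]

lemma tMul_mat0_right (A : Mat2) : tMul A mat0 = mat0 := by
  funext i j; simp [tMul_apply, mat0]

/-- the zero matrix lies in every ideal -/
lemma mat0_mem {I : Set Mat2} (hI : IsIdeal I) : mat0 ∈ I := by
  obtain ⟨⟨A, hA⟩, hcl⟩ := hI
  have := hcl A hA mat0 mat0
  rwa [tMul_mat0_left, tMul_mat0_right] at this

/-! ### toE, projPt, delta basics -/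

@[simp] lemma toE_bot : toE ⊥ = ⊥ := rfl
@[simp] lemma toE_coe (r : ℝ) : toE (r : Rb) = (r : EReal) := rfl
@[simp] lemma toE_ne_top (x : Rb) : toE x ≠ ⊤ := by
  induction x using WithBot.recBotCoe <;> simp

lemma projPt_def (v : Fin 2 → Rb) : projPt v = toE (v 1) - toE (v 0) := rfl

@[simp] lemma delta_coe_coe (a b : ℝ) :
    delta (a : EReal) (b : EReal) = ENNReal.ofReal |a - b| := by
  unfold delta
  rw [if_pos ⟨⟨a, rfl⟩, ⟨b, rfl⟩⟩]
  norm_num [EReal.toReal_coe]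

lemma delta_self (x : EReal) : delta x x = 0 := by
  induction x using EReal.rec with
  | coe r => simp
  | bot => unfold delta; simp
  | top => unfold delta; simp

lemma delta_not_real {x y : EReal} (h : ¬((∃ a : ℝ, x = (a:EReal)) ∧ ∃ b : ℝ, y = (b:EReal)))
    (hne : x ≠ y) : delta x y = ⊤ := by
  unfold delta; rw [if_neg h, if_neg hne]

@[simp] lemma delta_bot_top : delta (⊥ : EReal) ⊤ = ⊤ := by
  apply delta_not_real <;> simp
@[simp] lemma delta_top_bot : delta (⊤ : EReal) ⊥ = ⊤ := by
  apply delta_not_real <;> simp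
@[simp] lemma delta_bot_coe (b : ℝ) : delta (⊥ : EReal) (b : EReal) = ⊤ := by
  apply delta_not_real <;> simp
@[simp] lemma delta_coe_bot (a : ℝ) : delta (a : EReal) (⊥ : EReal) = ⊤ := by
  apply delta_not_real
  · rintro ⟨-, b, hb⟩; exact EReal.coe_ne_bot _ hb.symm
  · simp
@[simp] lemma delta_top_coe (b : ℝ) : delta (⊤ : EReal) (b : EReal) = ⊤ := by
  apply delta_not_real <;> simp
@[simp] lemma delta_coe_top (a : ℝ) : delta (a : EReal) (⊤ : EReal) = ⊤ := by
  apply delta_not_real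
  · rintro ⟨-, b, hb⟩; exact EReal.coe_ne_top _ hb.symm
  · simp
@[simp] lemma delta_bot_bot : delta (⊥ : EReal) ⊥ = 0 := delta_self _
@[simp] lemma delta_top_top : delta (⊤ : EReal) ⊤ = 0 := delta_self _

lemma delta_add_const (z w : EReal) (c : ℝ) : delta (z + c) (w + c) = delta z w := by
  induction z using EReal.rec <;> induction w using EReal.rec <;>
    simp [← EReal.coe_add] <;> ring_nf

lemma delta_neg (z w : EReal) : delta (-z) (-w) = delta z w := by
  induction z using EReal.rec <;> induction w using EReal.rec <;>
    simp [← EReal.coe_neg]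
  rw [show ∀ a b : ℝ, |-a + b| = |a - b| from fun a b => by rw [← abs_neg]; ring_nf]

/-! ### EReal helpers -/

lemma addc_cancel (z : EReal) (c : ℝ) : (z + (c : EReal)) + ((-c : ℝ) : EReal) = z := by
  induction z using EReal.rec with
  | bot => simp
  | top => simp
  | coe a => norm_cast; ring

lemma addc_inj (c : ℝ) : Function.Injective (fun z : EReal => z + (c : EReal)) := by
  intro a b h
  have h' : a + (c : EReal) = b + (c : EReal) := h
  have hh : (a + (c : EReal)) + ((-c : ℝ) : EReal) = (b + (c : EReal)) + ((-c : ℝ) : EReal) := by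
    rw [h']
  rwa [addc_cancel, addc_cancel] at hh

lemma eneg_inj : Function.Injective (fun z : EReal => -z) := by
  intro a b h; simpa using congrArg (fun z : EReal => -z) h

lemma Icc_bot_top_eq_univ : Set.Icc (⊥ : EReal) ⊤ = Set.univ :=
  Set.eq_univ_of_forall fun z => ⟨bot_le, le_top⟩

/-! ### IsomEmbed constructions -/

lemma isomEmbed_empty (N : Set EReal) : IsomEmbed ∅ N :=
  ⟨id, fun x hx => absurd hx (Set.notMem_empty x),
    fun x hx => absurd hx (Set.notMem_empty x),
    fun x hx => absurd hx (Set.notMem_empty x)⟩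

lemma isomEmbed_singleton (p : EReal) {N : Set EReal} (hN : N.Nonempty) :
    IsomEmbed (Set.Icc p p) N := by
  obtain ⟨b, hb⟩ := hN
  rw [Set.Icc_self]
  refine ⟨fun _ => b, fun x _ => hb, ?_, ?_⟩
  · intro x hx y hy _
    rw [Set.mem_singleton_iff] at hx hy; rw [hx, hy]
  · intro x hx y hy
    rw [Set.mem_singleton_iff] at hx hy; subst hx; subst hy
    rw [delta_self, delta_self]

lemma isomEmbed_translate {p q x y : EReal} (c : ℝ) (hx : x ≤ p + (c : EReal))
    (hy : q + (c : EReal) ≤ y) : IsomEmbed (Set.Icc p q) (Set.Icc x y) := by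
  refine ⟨fun z => z + (c : EReal), ?_, ?_, ?_⟩
  · intro z hz
    exact ⟨le_trans hx (add_le_add_left hz.1 _), le_trans (add_le_add_left hz.2 _) hy⟩
  · intro a _ b _ h; exact addc_inj c h
  · intro a _ b _; exact delta_add_const a b c

lemma isomEmbed_translate_Ioo {p q x y : EReal} (c : ℝ) (hx : x < p + (c : EReal))
    (hy : q + (c : EReal) < y) : IsomEmbed (Set.Icc p q) (Set.Ioo x y) := by
  refine ⟨fun z => z + (c : EReal), ?_, ?_, ?_⟩
  · intro z hz
    exact ⟨lt_of_lt_of_le hx (add_le_add_left hz.1 _),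
      lt_of_le_of_lt (add_le_add_left hz.2 _) hy⟩
  · intro a _ b _ h; exact addc_inj c h
  · intro a _ b _; exact delta_add_const a b c

lemma isomEmbed_reflect {p q x y : EReal} (c : ℝ) (hx : x ≤ -q + (c : EReal))
    (hy : -p + (c : EReal) ≤ y) : IsomEmbed (Set.Icc p q) (Set.Icc x y) := by
  refine ⟨fun z => -z + (c : EReal), ?_, ?_, ?_⟩
  · intro z hz
    refine ⟨le_trans hx (add_le_add_left ?_ _), le_trans (add_le_add_left ?_ _) hy⟩
    · exact EReal.neg_le_neg_iff.2 hz.2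
    · exact EReal.neg_le_neg_iff.2 hz.1
  · intro a _ b _ h; exact eneg_inj (addc_inj c h)
  · intro a _ b _; rw [delta_add_const, delta_neg]

lemma isomEmbed_into_univ (M : Set EReal) : IsomEmbed M (Set.Icc ⊥ ⊤) := by
  refine ⟨id, fun x _ => ⟨bot_le, le_top⟩, fun a _ b _ h => h, fun a _ b _ => rfl⟩

/-! ### extraction helpers -/

lemma delta_coe_coe_ne_top (a b : ℝ) : delta (a : EReal) (b : EReal) ≠ ⊤ := by
  simp [ENNReal.ofReal_ne_top]

lemma both_real_of_delta {a b : EReal} (h0 : delta a b ≠ 0) (ht : delta a b ≠ ⊤) :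
    (∃ a' : ℝ, a = (a' : EReal)) ∧ (∃ b' : ℝ, b = (b' : EReal)) := by
  by_contra h
  rcases eq_or_ne a b with rfl | hne
  · exact h0 (delta_self a)
  · exact ht (delta_not_real h hne)

lemma delta_coe_ne_zero {a b : ℝ} (h : a ≠ b) : delta (a : EReal) (b : EReal) ≠ 0 := by
  rw [delta_coe_coe]
  simp only [ne_eq, ENNReal.ofReal_eq_zero, not_le]
  exact abs_pos.2 (sub_ne_zero.2 h)

lemma exists_two_reals {p q : EReal} (h : p < q) :
    ∃ r s : ℝ, r < s ∧ (r : EReal) ∈ Set.Icc p q ∧ (s : EReal) ∈ Set.Icc p q := by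
  induction p using EReal.rec with
  | top => exact absurd (lt_of_lt_of_le h le_top) (lt_irrefl _)
  | coe a =>
    induction q using EReal.rec with
    | bot => exact absurd (lt_of_le_of_lt bot_le h) (lt_irrefl _)
    | coe b =>
      refine ⟨a, b, by exact_mod_cast h, ⟨le_rfl, le_of_lt h⟩, ⟨le_of_lt h, le_rfl⟩⟩
    | top => exact ⟨a, a + 1, by linarith, ⟨le_rfl, le_top⟩, ⟨by norm_cast; linarith, le_top⟩⟩
  | bot =>
    induction q using EReal.rec with
    | bot => exact absurd h (lt_irrefl _)
    | coe b => exact ⟨b - 1, b, by linarith, ⟨bot_le, by norm_cast; linarith⟩, ⟨bot_le, le_rfl⟩⟩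
    | top => exact ⟨0, 1, by norm_num, ⟨bot_le, le_top⟩, ⟨bot_le, le_top⟩⟩

/-- In an isometric embedding of an interval with at least two points into a set of
real points, the endpoints must be real. -/
lemma endpoints_real_of_embed {p q : EReal} (hpq : p < q) {N : Set EReal}
    (hN : ∀ z ∈ N, ∃ r : ℝ, z = (r : EReal)) (h : IsomEmbed (Set.Icc p q) N) :
    (∃ p' : ℝ, p = (p' : EReal)) ∧ ∃ q' : ℝ, q = (q' : EReal) := by
  obtain ⟨f, hmaps, hinj, hiso⟩ := h
  obtain ⟨r, s, hrs, hr, hs⟩ := exists_two_reals hpq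
  have hp : p ∈ Set.Icc p q := ⟨le_rfl, le_of_lt hpq⟩
  have hq : q ∈ Set.Icc p q := ⟨le_of_lt hpq, le_rfl⟩
  obtain ⟨fr, hfr⟩ := hN _ (hmaps hr)
  constructor
  · by_contra hpr
    obtain ⟨fp, hfp⟩ := hN _ (hmaps hp)
    have h1 : delta (f p) (f (r : EReal)) = ⊤ := by
      rw [hiso _ hp _ hr]
      refine delta_not_real ?_ ?_
      · rintro ⟨hpr', -⟩; exact hpr hpr'
      · rintro rfl; exact hpr ⟨r, rfl⟩
    rw [hfp, hfr] at h1
    exact delta_coe_coe_ne_top _ _ h1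
  · by_contra hqr
    obtain ⟨fq, hfq⟩ := hN _ (hmaps hq)
    have h1 : delta (f q) (f (r : EReal)) = ⊤ := by
      rw [hiso _ hq _ hr]
      refine delta_not_real ?_ ?_
      · rintro ⟨hqr', -⟩; exact hqr hqr'
      · rintro rfl; exact hqr ⟨r, rfl⟩
    rw [hfq, hfr] at h1
    exact delta_coe_coe_ne_top _ _ h1

/-! ### membership classification in targets -/

lemma mem_Icc_coe_coe {x y : ℝ} {z : EReal} (hz : z ∈ Set.Icc (x : EReal) (y : EReal)) :
    ∃ r : ℝ, z = (r : EReal) ∧ x ≤ r ∧ r ≤ y := by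
  induction z using EReal.rec with
  | bot => exact absurd hz.1 (by simp)
  | top => exact absurd hz.2 (by simp)
  | coe r => exact ⟨r, rfl, by exact_mod_cast hz.1, by exact_mod_cast hz.2⟩

lemma mem_Ioo_coe_coe {x y : ℝ} {z : EReal} (hz : z ∈ Set.Ioo (x : EReal) (y : EReal)) :
    ∃ r : ℝ, z = (r : EReal) ∧ x < r ∧ r < y := by
  induction z using EReal.rec with
  | bot => exact absurd hz.1 (by simp)
  | top => exact absurd hz.2 (by simp)
  | coe r => exact ⟨r, rfl, by exact_mod_cast hz.1, by exact_mod_cast hz.2⟩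

lemma mem_Ioo_bot_top {z : EReal} (hz : z ∈ Set.Ioo (⊥ : EReal) ⊤) :
    ∃ r : ℝ, z = (r : EReal) := by
  induction z using EReal.rec with
  | bot => exact absurd hz.1 (lt_irrefl _)
  | top => exact absurd hz.2 (lt_irrefl _)
  | coe r => exact ⟨r, rfl⟩

lemma mem_Icc_bot_coe {y : ℝ} {z : EReal} (hz : z ∈ Set.Icc (⊥ : EReal) (y : EReal)) :
    z = ⊥ ∨ ∃ r : ℝ, z = (r : EReal) := by
  induction z using EReal.rec with
  | bot => exact Or.inl rfl
  | top => exact absurd hz.2 (by simp)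
  | coe r => exact Or.inr ⟨r, rfl⟩

lemma mem_Icc_coe_top {x : ℝ} {z : EReal} (hz : z ∈ Set.Icc (x : EReal) (⊤ : EReal)) :
    z = ⊤ ∨ ∃ r : ℝ, z = (r : EReal) := by
  induction z using EReal.rec with
  | bot => exact absurd hz.1 (by simp)
  | top => exact Or.inl rfl
  | coe r => exact Or.inr ⟨r, rfl⟩

/-! ### extraction lemmas -/

lemma not_embed_nonempty_empty {p q : EReal} (hpq : p ≤ q) :
    ¬ IsomEmbed (Set.Icc p q) ∅ := by
  rintro ⟨f, hmaps, -, -⟩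
  exact Set.notMem_empty _ (hmaps (Set.left_mem_Icc.2 hpq))

lemma not_embed_pair_singleton {p q : EReal} (hpq : p < q) (a : EReal) :
    ¬ IsomEmbed (Set.Icc p q) {a} := by
  rintro ⟨f, hmaps, hinj, -⟩
  have hp : p ∈ Set.Icc p q := ⟨le_rfl, le_of_lt hpq⟩
  have hq : q ∈ Set.Icc p q := ⟨le_of_lt hpq, le_rfl⟩
  have h1 : f p = a := hmaps hp
  have h2 : f q = a := hmaps hq
  exact (ne_of_lt hpq) (hinj hp hq (h1.trans h2.symm))

lemma embed_Icc_extract {p q : EReal} (hpq : p < q) {x y : ℝ}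
    (h : IsomEmbed (Set.Icc p q) (Set.Icc (x : EReal) (y : EReal))) :
    ∃ p' q' : ℝ, p = (p' : EReal) ∧ q = (q' : EReal) ∧ q' - p' ≤ y - x := by
  obtain ⟨⟨p', rfl⟩, ⟨q', rfl⟩⟩ :=
    endpoints_real_of_embed hpq
      (fun z hz => (mem_Icc_coe_coe hz).imp fun r hr => hr.1) h
  obtain ⟨f, hmaps, hinj, hiso⟩ := h
  have hp : (p' : EReal) ∈ Set.Icc (p' : EReal) (q' : EReal) := ⟨le_rfl, le_of_lt hpq⟩
  have hq : (q' : EReal) ∈ Set.Icc (p' : EReal) (q' : EReal) := ⟨le_of_lt hpq, le_rfl⟩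
  obtain ⟨fp, hfp, hfpx, hfpy⟩ := mem_Icc_coe_coe (hmaps hp)
  obtain ⟨fq, hfq, hfqx, hfqy⟩ := mem_Icc_coe_coe (hmaps hq)
  have hd := hiso _ hp _ hq
  rw [hfp, hfq, delta_coe_coe, delta_coe_coe] at hd
  rw [ENNReal.ofReal_eq_ofReal_iff (abs_nonneg _) (abs_nonneg _)] at hd
  have hplt : p' < q' := by exact_mod_cast hpq
  refine ⟨p', q', rfl, rfl, ?_⟩
  have : q' - p' ≤ |fp - fq| := by
    rw [hd, abs_sub_comm, abs_of_pos (by linarith)]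
  have h2 : |fp - fq| ≤ y - x := abs_sub_le_iff.2 ⟨by linarith, by linarith⟩
  linarith

lemma embed_Ioo_extract {p q : EReal} (hpq : p < q) {x y : ℝ}
    (h : IsomEmbed (Set.Icc p q) (Set.Ioo (x : EReal) (y : EReal))) :
    ∃ p' q' : ℝ, p = (p' : EReal) ∧ q = (q' : EReal) ∧ q' - p' < y - x := by
  obtain ⟨⟨p', rfl⟩, ⟨q', rfl⟩⟩ :=
    endpoints_real_of_embed hpq
      (fun z hz => (mem_Ioo_coe_coe hz).imp fun r hr => hr.1) h
  obtain ⟨f, hmaps, hinj, hiso⟩ := h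
  have hp : (p' : EReal) ∈ Set.Icc (p' : EReal) (q' : EReal) := ⟨le_rfl, le_of_lt hpq⟩
  have hq : (q' : EReal) ∈ Set.Icc (p' : EReal) (q' : EReal) := ⟨le_of_lt hpq, le_rfl⟩
  obtain ⟨fp, hfp, hfpx, hfpy⟩ := mem_Ioo_coe_coe (hmaps hp)
  obtain ⟨fq, hfq, hfqx, hfqy⟩ := mem_Ioo_coe_coe (hmaps hq)
  have hd := hiso _ hp _ hq
  rw [hfp, hfq, delta_coe_coe, delta_coe_coe] at hd
  rw [ENNReal.ofReal_eq_ofReal_iff (abs_nonneg _) (abs_nonneg _)] at hd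
  have hplt : p' < q' := by exact_mod_cast hpq
  refine ⟨p', q', rfl, rfl, ?_⟩
  have : q' - p' ≤ |fp - fq| := by
    rw [hd, abs_sub_comm, abs_of_pos (by linarith)]
  have h2 : |fp - fq| < y - x := abs_sub_lt_iff.2 ⟨by linarith, by linarith⟩
  linarith

lemma embed_line_extract {p q : EReal} (hpq : p < q)
    (h : IsomEmbed (Set.Icc p q) (Set.Ioo (⊥ : EReal) ⊤)) :
    ∃ p' q' : ℝ, p = (p' : EReal) ∧ q = (q' : EReal) := by
  obtain ⟨⟨p', rfl⟩, ⟨q', rfl⟩⟩ :=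
    endpoints_real_of_embed hpq (fun z hz => mem_Ioo_bot_top hz) h
  exact ⟨p', q', rfl, rfl⟩

lemma not_embed_full_ray_lo (r : ℝ) :
    ¬ IsomEmbed (Set.Icc (⊥ : EReal) ⊤) (Set.Icc (⊥ : EReal) (r : EReal)) := by
  rintro ⟨f, hmaps, hinj, hiso⟩
  have hmem : ∀ z : EReal, z ∈ Set.Icc (⊥ : EReal) ⊤ := fun z => ⟨bot_le, le_top⟩
  have h01 := hiso _ (hmem ((0:ℝ) : EReal)) _ (hmem ((1:ℝ) : EReal))
  rw [delta_coe_coe] at h01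
  have hne0 : delta (f ((0:ℝ) : EReal)) (f ((1:ℝ) : EReal)) ≠ 0 := by
    rw [h01]; norm_num
  have hneT : delta (f ((0:ℝ) : EReal)) (f ((1:ℝ) : EReal)) ≠ ⊤ := by
    rw [h01]; exact ENNReal.ofReal_ne_top
  obtain ⟨⟨a, ha⟩, -⟩ := both_real_of_delta hne0 hneT
  have hbot : f ⊥ = ⊥ := by
    rcases mem_Icc_bot_coe (hmaps (hmem ⊥)) with hb | ⟨s, hs⟩
    · exact hb
    · exfalso
      have hd := hiso _ (hmem ⊥) _ (hmem ((0:ℝ) : EReal))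
      rw [hs, ha, delta_bot_coe, delta_coe_coe] at hd
      exact ENNReal.ofReal_ne_top hd
  have htop : f ⊤ = ⊥ := by
    rcases mem_Icc_bot_coe (hmaps (hmem ⊤)) with hb | ⟨s, hs⟩
    · exact hb
    · exfalso
      have hd := hiso _ (hmem ⊤) _ (hmem ((0:ℝ) : EReal))
      rw [hs, ha, delta_top_coe, delta_coe_coe] at hd
      exact ENNReal.ofReal_ne_top hd
  have : (⊥ : EReal) = ⊤ := hinj (hmem ⊥) (hmem ⊤) (hbot.trans htop.symm)
  simp at this

lemma not_embed_full_ray_hi (r : ℝ) :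
    ¬ IsomEmbed (Set.Icc (⊥ : EReal) ⊤) (Set.Icc (r : EReal) (⊤ : EReal)) := by
  rintro ⟨f, hmaps, hinj, hiso⟩
  have hmem : ∀ z : EReal, z ∈ Set.Icc (⊥ : EReal) ⊤ := fun z => ⟨bot_le, le_top⟩
  have h01 := hiso _ (hmem ((0:ℝ) : EReal)) _ (hmem ((1:ℝ) : EReal))
  rw [delta_coe_coe] at h01
  have hne0 : delta (f ((0:ℝ) : EReal)) (f ((1:ℝ) : EReal)) ≠ 0 := by
    rw [h01]; norm_num
  have hneT : delta (f ((0:ℝ) : EReal)) (f ((1:ℝ) : EReal)) ≠ ⊤ := by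
    rw [h01]; exact ENNReal.ofReal_ne_top
  obtain ⟨⟨a, ha⟩, -⟩ := both_real_of_delta hne0 hneT
  have hbot : f ⊥ = ⊤ := by
    rcases mem_Icc_coe_top (hmaps (hmem ⊥)) with hb | ⟨s, hs⟩
    · exact hb
    · exfalso
      have hd := hiso _ (hmem ⊥) _ (hmem ((0:ℝ) : EReal))
      rw [hs, ha, delta_bot_coe, delta_coe_coe] at hd
      exact ENNReal.ofReal_ne_top hd
  have htop : f ⊤ = ⊤ := by
    rcases mem_Icc_coe_top (hmaps (hmem ⊤)) with hb | ⟨s, hs⟩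
    · exact hb
    · exfalso
      have hd := hiso _ (hmem ⊤) _ (hmem ((0:ℝ) : EReal))
      rw [hs, ha, delta_top_coe, delta_coe_coe] at hd
      exact ENNReal.ofReal_ne_top hd
  have : (⊥ : EReal) = ⊤ := hinj (hmem ⊥) (hmem ⊤) (hbot.trans htop.symm)
  simp at this

/-! ### vectors and column spaces -/

lemma Rb.cases (x : Rb) : x = ⊥ ∨ ∃ r : ℝ, x = (r : Rb) := by
  induction x using WithBot.recBotCoe with
  | bot => exact Or.inl rfl
  | coe r => exact Or.inr ⟨r, rfl⟩

def vec (a b : Rb) : Fin 2 → Rb := ![a, b]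
@[simp] lemma vec_zero (a b : Rb) : vec a b 0 = a := rfl
@[simp] lemma vec_one (a b : Rb) : vec a b 1 = b := rfl

def colv (A : Mat2) (j : Fin 2) : Fin 2 → Rb := fun i => A i j
lemma colv_apply (A : Mat2) (i j : Fin 2) : colv A j i = A i j := rfl

lemma mem_colSpace {A : Mat2} {v : Fin 2 → Rb} :
    v ∈ ColSpace A ↔ ∃ c0 c1 : Rb, ∀ i, v i = (c0 + A i 0) ⊔ (c1 + A i 1) := by
  constructor
  · rintro ⟨c, hc⟩; exact ⟨c 0, c 1, fun i => by rw [hc i, sup2]⟩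
  · rintro ⟨c0, c1, h⟩
    refine ⟨vec c0 c1, fun i => ?_⟩
    rw [sup2]; simpa using h i

lemma smul_mem_colSpace {A : Mat2} {v : Fin 2 → Rb} (hv : v ∈ ColSpace A) (lam : Rb) :
    (fun i => lam + v i) ∈ ColSpace A := by
  rw [mem_colSpace] at hv ⊢
  obtain ⟨c0, c1, hc⟩ := hv
  refine ⟨lam + c0, lam + c1, fun i => ?_⟩
  rw [hc i, ← max_add_add_left, add_assoc, add_assoc]

lemma colv_mem_colSpace (A : Mat2) (j : Fin 2) : colv A j ∈ ColSpace A := by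
  rw [mem_colSpace]
  fin_cases j
  · exact ⟨0, ⊥, fun i => by simp [colv_apply]⟩
  · exact ⟨⊥, 0, fun i => by simp [colv_apply]⟩

lemma zeroVec_mem_colSpace (A : Mat2) : zeroVec ∈ ColSpace A := by
  rw [mem_colSpace]
  exact ⟨⊥, ⊥, fun i => by simp [zeroVec]⟩

@[simp] lemma projPt_zeroVec : projPt zeroVec = ⊥ := by
  simp [projPt, zeroVec, EReal.bot_sub]

lemma toE_sub_coe (x y : ℝ) : (x : EReal) - (y : EReal) = ((x - y : ℝ) : EReal) := by
  norm_cast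

lemma proj_vec_coe_coe (a b : ℝ) : projPt (vec (a : Rb) (b : Rb)) = ((b - a : ℝ) : EReal) := by
  rw [projPt_def, vec_one, vec_zero, toE_coe, toE_coe, toE_sub_coe]
lemma proj_vec_coe_bot (a : ℝ) : projPt (vec (a : Rb) ⊥) = ⊥ := by
  simp [projPt, EReal.bot_sub]
lemma proj_vec_bot_coe (b : ℝ) : projPt (vec ⊥ (b : Rb)) = ⊤ := by
  simp [projPt, EReal.coe_sub_bot]
lemma proj_vec_bot_bot : projPt (vec (⊥:Rb) ⊥) = ⊥ := by
  simp [projPt, EReal.bot_sub]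

/-- any vector equals `vec` of its coordinates -/
lemma vec_eta (v : Fin 2 → Rb) : v = vec (v 0) (v 1) := by
  rw [vec_ext_iff]; exact ⟨rfl, rfl⟩

lemma toE_addc (lam : ℝ) (x : Rb) : toE ((lam : Rb) + x) = (lam : EReal) + toE x := by
  rcases Rb.cases x with rfl | ⟨r, rfl⟩
  · rw [WithBot.add_bot]; simp
  · rw [show (lam : Rb) + (r : Rb) = ((lam + r : ℝ) : Rb) by norm_cast]
    rw [toE_coe, toE_coe, ← EReal.coe_add]

lemma esub_shift (lam : ℝ) (x y : EReal) (hx : x ≠ ⊤) (hy : y ≠ ⊤) :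
    ((lam : EReal) + x) - ((lam : EReal) + y) = x - y := by
  induction x using EReal.rec with
  | top => exact absurd rfl hx
  | bot =>
    rw [show (lam : EReal) + ⊥ = ⊥ by simp, EReal.bot_sub, EReal.bot_sub]
  | coe a =>
    induction y using EReal.rec with
    | top => exact absurd rfl hy
    | bot =>
      rw [show (lam : EReal) + ⊥ = ⊥ by simp, ← EReal.coe_add, EReal.coe_sub_bot,
        EReal.coe_sub_bot]
    | coe b =>
      rw [← EReal.coe_add, ← EReal.coe_add, toE_sub_coe, toE_sub_coe]
      norm_num

lemma projPt_smul (lam : ℝ) (v : Fin 2 → Rb) :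
    projPt (fun i => (lam : Rb) + v i) = projPt v := by
  have hp : projPt (fun i => (lam : Rb) + v i)
      = toE ((lam : Rb) + v 1) - toE ((lam : Rb) + v 0) := rfl
  rw [hp, toE_addc, toE_addc, projPt_def]
  exact esub_shift lam _ _ (toE_ne_top _) (toE_ne_top _)

lemma smul_ne_zeroVec {v : Fin 2 → Rb} (hv : v ≠ zeroVec) (lam : ℝ) :
    (fun i => (lam : Rb) + v i) ≠ zeroVec := by
  rw [ne_zeroVec_iff] at hv ⊢
  rcases hv with h | h
  · left; show (lam : Rb) + v 0 ≠ ⊥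
    rcases Rb.cases (v 0) with h0 | ⟨a, h0⟩
    · exact absurd h0 h
    · rw [h0, show (lam : Rb) + (a : Rb) = ((lam + a : ℝ) : Rb) by norm_cast]
      exact WithBot.coe_ne_bot
  · right; show (lam : Rb) + v 1 ≠ ⊥
    rcases Rb.cases (v 1) with h1 | ⟨a, h1⟩
    · exact absurd h1 h
    · rw [h1, show (lam : Rb) + (a : Rb) = ((lam + a : ℝ) : Rb) by norm_cast]
      exact WithBot.coe_ne_bot

lemma mem_PC_of_col {A : Mat2} {j : Fin 2} (h : colv A j ≠ zeroVec) :
    projPt (colv A j) ∈ PC A := ⟨colv A j, colv_mem_colSpace A j, h, rfl⟩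

/-- two nonzero vectors with the same projective point are tropical multiples -/
lemma prop_aux {a b c d : Rb} (hu : ¬(a = ⊥ ∧ b = ⊥)) (hv : ¬(c = ⊥ ∧ d = ⊥))
    (h : toE b - toE a = toE d - toE c) :
    ∃ lam : ℝ, a = (lam : Rb) + c ∧ b = (lam : Rb) + d := by
  rcases Rb.cases a with rfl | ⟨A, rfl⟩ <;> rcases Rb.cases b with rfl | ⟨B, rfl⟩ <;>
    rcases Rb.cases c with rfl | ⟨C, rfl⟩ <;> rcases Rb.cases d with rfl | ⟨D, rfl⟩ <;>
      simp only [toE_bot, toE_coe, EReal.bot_sub, EReal.coe_sub_bot, toE_sub_coe] at h ⊢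
  -- a=⊥ b=⊥ (4 cases): contradiction with hu
  · exact absurd ⟨rfl, rfl⟩ hu
  · exact absurd ⟨rfl, rfl⟩ hu
  · exact absurd ⟨rfl, rfl⟩ hu
  · exact absurd ⟨rfl, rfl⟩ hu
  -- a=⊥ b=B : proj = ⊤
  · exact absurd ⟨rfl, rfl⟩ hv
  · exact ⟨B - D, by rw [WithBot.add_bot], by norm_cast; ring⟩
  · simp at h
  · exact absurd h.symm (EReal.coe_ne_top _)
  -- a=A b=⊥ : proj = ⊥
  · exact absurd ⟨rfl, rfl⟩ hv
  · simp at h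
  · exact ⟨A - C, by norm_cast; ring, by rw [WithBot.add_bot]⟩
  · exact absurd h.symm (EReal.coe_ne_bot _)
  -- a=A b=B : proj real
  · exact absurd ⟨rfl, rfl⟩ hv
  · exact absurd h (EReal.coe_ne_top _)
  · exact absurd h (EReal.coe_ne_bot _)
  · refine ⟨A - C, by norm_cast; ring, ?_⟩
    have : B - A = D - C := by exact_mod_cast h
    norm_cast; linarith

/-! ### real max lemmas -/

lemma rmax_le (a b c d : ℝ) : max b d - max a c ≤ max (b - a) (d - c) := by
  rcases max_cases b d with ⟨hb, hb'⟩ | ⟨hb, hb'⟩ <;> rcases max_cases a c with ⟨ha, ha'⟩ | ⟨ha, ha'⟩ <;>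
    rw [hb, ha]
  · exact le_max_of_le_left (by linarith)
  · exact le_max_of_le_left (by linarith)
  · exact le_max_of_le_right (by linarith)
  · exact le_max_of_le_right (by linarith)

lemma rmin_le (a b c d : ℝ) : min (b - a) (d - c) ≤ max b d - max a c := by
  rcases max_cases b d with ⟨hb, hb'⟩ | ⟨hb, hb'⟩ <;> rcases max_cases a c with ⟨ha, ha'⟩ | ⟨ha, ha'⟩ <;>
    rw [hb, ha]
  · exact min_le_of_left_le (by linarith)
  · exact min_le_of_right_le (by linarith)
  · exact min_le_of_left_le (by linarith)
  · exact min_le_of_right_le (by linarith)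

lemma rb_add (x y : ℝ) : (x : Rb) + (y : Rb) = ((x + y : ℝ) : Rb) := by norm_cast
lemma rb_sup (x y : ℝ) : (x : Rb) ⊔ (y : Rb) = ((max x y : ℝ) : Rb) := by
  rcases le_total x y with h | h
  · rw [max_eq_right h, sup_eq_right.2 (by exact_mod_cast h)]
  · rw [max_eq_left h, sup_eq_left.2 (by exact_mod_cast h)]

/-! ### projection of sups -/

lemma sup_proj_le {a b c d : Rb} (hu : ¬(a = ⊥ ∧ b = ⊥)) (hw : ¬(c = ⊥ ∧ d = ⊥)) :
    toE (b ⊔ d) - toE (a ⊔ c) ≤ (toE b - toE a) ⊔ (toE d - toE c) := by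
  rcases Rb.cases a with rfl | ⟨A, rfl⟩ <;> rcases Rb.cases b with rfl | ⟨B, rfl⟩ <;>
    rcases Rb.cases c with rfl | ⟨C, rfl⟩ <;> rcases Rb.cases d with rfl | ⟨D, rfl⟩ <;>
      skip
  all_goals try simp only [not_and] at hu hw
  all_goals try exact absurd rfl (hu rfl)
  all_goals try exact absurd rfl (hw rfl)
  all_goals simp only [bot_sup_eq, sup_bot_eq, top_sup_eq, sup_top_eq, bot_inf_eq, inf_bot_eq,
        top_inf_eq, inf_top_eq, rb_sup, rb_add, toE_bot, toE_coe,
        EReal.bot_sub, EReal.coe_sub_bot, toE_sub_coe]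
  all_goals try first
      | exact le_top
      | exact bot_le
      | exact le_rfl
  · exact EReal.coe_le_coe_iff.2 (sub_le_sub_left (le_max_right A C) D)
  · exact EReal.coe_le_coe_iff.2 (sub_le_sub_left (le_max_left A C) B)
  · rcases le_total (B - A) (D - C) with h | h
    · exact le_sup_of_le_right
        (EReal.coe_le_coe_iff.2 (le_trans (rmax_le A B C D) (le_of_eq (max_eq_right h))))
    · exact le_sup_of_le_left
        (EReal.coe_le_coe_iff.2 (le_trans (rmax_le A B C D) (le_of_eq (max_eq_left h))))

lemma le_sup_proj {a b c d : Rb} (hu : ¬(a = ⊥ ∧ b = ⊥)) (hw : ¬(c = ⊥ ∧ d = ⊥)) :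
    (toE b - toE a) ⊓ (toE d - toE c) ≤ toE (b ⊔ d) - toE (a ⊔ c) := by
  rcases Rb.cases a with rfl | ⟨A, rfl⟩ <;> rcases Rb.cases b with rfl | ⟨B, rfl⟩ <;>
    rcases Rb.cases c with rfl | ⟨C, rfl⟩ <;> rcases Rb.cases d with rfl | ⟨D, rfl⟩ <;>
      skip
  all_goals try simp only [not_and] at hu hw
  all_goals try exact absurd rfl (hu rfl)
  all_goals try exact absurd rfl (hw rfl)
  all_goals simp only [bot_sup_eq, sup_bot_eq, top_sup_eq, sup_top_eq, bot_inf_eq, inf_bot_eq,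
        top_inf_eq, inf_top_eq, rb_sup, rb_add, toE_bot, toE_coe,
        EReal.bot_sub, EReal.coe_sub_bot, toE_sub_coe]
  all_goals try first
      | exact le_top
      | exact bot_le
      | exact le_rfl
  · exact EReal.coe_le_coe_iff.2 (sub_le_sub_right (le_max_right B D) C)
  · exact EReal.coe_le_coe_iff.2 (sub_le_sub_right (le_max_left B D) A)
  · rcases le_total (B - A) (D - C) with h | h
    · exact inf_le_of_left_le
        (EReal.coe_le_coe_iff.2 (le_trans (le_of_eq (min_eq_left h).symm) (rmin_le A B C D)))
    · exact inf_le_of_right_le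
        (EReal.coe_le_coe_iff.2 (le_trans (le_of_eq (min_eq_right h).symm) (rmin_le A B C D)))

/-! ### combo construction -/

lemma rb_zero_add (x : Rb) : ((0:ℝ) : Rb) + x = x := by
  rcases Rb.cases x with rfl | ⟨r, rfl⟩
  · exact WithBot.add_bot _
  · rw [rb_add]; norm_num

lemma combo_aux {a b c d : Rb} (hu : ¬(a = ⊥ ∧ b = ⊥)) (hw : ¬(c = ⊥ ∧ d = ⊥)) {z : EReal}
    (h1 : toE b - toE a ≤ z) (h2 : z ≤ toE d - toE c) :
    ∃ c0 c1 : Rb, ¬((c0 + a) ⊔ (c1 + c) = ⊥ ∧ (c0 + b) ⊔ (c1 + d) = ⊥) ∧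
      toE ((c0 + b) ⊔ (c1 + d)) - toE ((c0 + a) ⊔ (c1 + c)) = z := by
  by_cases hz1 : z = toE b - toE a
  · refine ⟨((0:ℝ) : Rb), ⊥, ?_, ?_⟩ <;>
      rw [rb_zero_add, rb_zero_add, WithBot.bot_add, WithBot.bot_add, sup_bot_eq, sup_bot_eq]
    · exact hu
    · exact hz1.symm
  by_cases hz2 : z = toE d - toE c
  · refine ⟨⊥, ((0:ℝ) : Rb), ?_, ?_⟩ <;>
      rw [rb_zero_add, rb_zero_add, WithBot.bot_add, WithBot.bot_add, bot_sup_eq, bot_sup_eq]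
    · exact hw
    · exact hz2.symm
  have h1' : toE b - toE a < z := lt_of_le_of_ne h1 fun h => hz1 h.symm
  have h2' : z < toE d - toE c := lt_of_le_of_ne h2 hz2
  rcases Rb.cases a with rfl | ⟨A, rfl⟩
  · rcases Rb.cases b with rfl | ⟨B, rfl⟩
    · exact absurd ⟨rfl, rfl⟩ hu
    · rw [toE_bot, toE_coe, EReal.coe_sub_bot] at h1'
      exact absurd h1' not_top_lt
  rcases Rb.cases d with rfl | ⟨D, rfl⟩
  · rw [toE_bot, EReal.bot_sub] at h2'
    exact absurd h2' (not_lt_bot)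
  have hzr : ∃ r : ℝ, z = (r : EReal) := by
    induction z using EReal.rec with
    | bot => exact absurd h1' not_lt_bot
    | top => exact absurd h2' not_top_lt
    | coe r => exact ⟨r, rfl⟩
  obtain ⟨r, rfl⟩ := hzr
  refine ⟨((-A : ℝ) : Rb), ((r - D : ℝ) : Rb), ?_, ?_⟩ <;>
    rw [show ((-A : ℝ) : Rb) + (A : Rb) = ((0:ℝ) : Rb) by rw [rb_add]; norm_num,
      show ((r - D : ℝ) : Rb) + (D : Rb) = ((r : ℝ) : Rb) by rw [rb_add]; norm_num]
  · rintro ⟨hbad, -⟩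
    have : ((0:ℝ) : Rb) ≤ ⊥ := hbad ▸ le_sup_left
    simp at this
  · have hfst : ((0:ℝ) : Rb) ⊔ (((r - D : ℝ) : Rb) + c) = ((0:ℝ) : Rb) := by
      rcases Rb.cases c with rfl | ⟨C, rfl⟩
      · rw [WithBot.add_bot, sup_bot_eq]
      · rw [toE_coe, toE_coe, toE_sub_coe] at h2
        have : r ≤ D - C := by exact_mod_cast h2
        rw [rb_add, rb_sup, max_eq_left (by linarith)]
    have hsnd : (((-A : ℝ) : Rb) + b) ⊔ ((r : ℝ) : Rb) = ((r : ℝ) : Rb) := by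
      rcases Rb.cases b with rfl | ⟨B, rfl⟩
      · rw [WithBot.add_bot, bot_sup_eq]
      · rw [toE_coe, toE_coe, toE_sub_coe] at h1
        have : B - A ≤ r := by exact_mod_cast h1
        rw [rb_add, rb_sup, max_eq_right (by linarith)]
    rw [hfst, hsnd, toE_coe, toE_coe, toE_sub_coe]
    norm_num

/-! ### PC structure -/

lemma col_ne_iff {A : Mat2} {j : Fin 2} :
    colv A j ≠ zeroVec ↔ ¬(A 0 j = ⊥ ∧ A 1 j = ⊥) := by
  rw [ne_zeroVec_iff]; show A 0 j ≠ ⊥ ∨ A 1 j ≠ ⊥ ↔ _; tauto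

lemma PC_mat0 : PC mat0 = ∅ := by
  ext z
  simp only [PC, Set.mem_setOf_eq, Set.mem_empty_iff_false, iff_false, not_exists]
  rintro v ⟨hvC, hv0, -⟩
  apply hv0
  rw [mem_colSpace] at hvC
  obtain ⟨c0, c1, hc⟩ := hvC
  funext i
  rw [hc i]
  show (c0 + ⊥) ⊔ (c1 + ⊥) = ⊥
  rw [WithBot.add_bot, WithBot.add_bot, sup_bot_eq]

lemma PC_single {A : Mat2} (h0 : colv A 0 ≠ zeroVec) (h1 : colv A 1 = zeroVec) :
    PC A = {projPt (colv A 0)} := by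
  ext z
  simp only [Set.mem_singleton_iff]
  constructor
  · rintro ⟨v, hvC, hv0, rfl⟩
    rw [mem_colSpace] at hvC
    obtain ⟨c0, c1, hc⟩ := hvC
    have hcol1 : ∀ i, A i 1 = ⊥ := fun i => congrFun h1 i
    have hv : ∀ i, v i = c0 + A i 0 := fun i => by
      rw [hc i, hcol1 i, WithBot.add_bot, sup_bot_eq]
    rcases Rb.cases c0 with rfl | ⟨lam, rfl⟩
    · exfalso; apply hv0; funext i; rw [hv i, WithBot.bot_add]; rfl
    · have hveq : v = fun i => (lam : Rb) + colv A 0 i := funext fun i => hv i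
      rw [hveq, projPt_smul]
  · rintro rfl
    exact mem_PC_of_col h0

lemma PC_single' {A : Mat2} (h0 : colv A 0 = zeroVec) (h1 : colv A 1 ≠ zeroVec) :
    PC A = {projPt (colv A 1)} := by
  ext z
  simp only [Set.mem_singleton_iff]
  constructor
  · rintro ⟨v, hvC, hv0, rfl⟩
    rw [mem_colSpace] at hvC
    obtain ⟨c0, c1, hc⟩ := hvC
    have hcol0 : ∀ i, A i 0 = ⊥ := fun i => congrFun h0 i
    have hv : ∀ i, v i = c1 + A i 1 := fun i => by
      rw [hc i, hcol0 i, WithBot.add_bot, bot_sup_eq]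
    rcases Rb.cases c1 with rfl | ⟨lam, rfl⟩
    · exfalso; apply hv0; funext i; rw [hv i, WithBot.bot_add]; rfl
    · have hveq : v = fun i => (lam : Rb) + colv A 1 i := funext fun i => hv i
      rw [hveq, projPt_smul]
  · rintro rfl
    exact mem_PC_of_col h1

lemma PC_both {A : Mat2} (h0 : colv A 0 ≠ zeroVec) (h1 : colv A 1 ≠ zeroVec) :
    PC A = Set.Icc (projPt (colv A 0) ⊓ projPt (colv A 1))
      (projPt (colv A 0) ⊔ projPt (colv A 1)) := by
  have hne0 := col_ne_iff.1 h0
  have hne1 := col_ne_iff.1 h1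
  ext z
  constructor
  · rintro ⟨v, hvC, hv0, rfl⟩
    rw [mem_colSpace] at hvC
    obtain ⟨c0, c1, hc⟩ := hvC
    rcases Rb.cases c0 with rfl | ⟨lam0, rfl⟩
    · have hv : ∀ i, v i = c1 + A i 1 := fun i => by
        rw [hc i, WithBot.bot_add, bot_sup_eq]
      rcases Rb.cases c1 with rfl | ⟨lam, rfl⟩
      · exfalso; apply hv0; funext i; rw [hv i, WithBot.bot_add]; rfl
      · have hveq : v = fun i => (lam : Rb) + colv A 1 i := funext fun i => hv i
        rw [hveq, projPt_smul]
        exact ⟨inf_le_right, le_sup_right⟩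
    · rcases Rb.cases c1 with rfl | ⟨lam1, rfl⟩
      · have hv : ∀ i, v i = (lam0 : Rb) + A i 0 := fun i => by
          rw [hc i, WithBot.bot_add, sup_bot_eq]
        have hveq : v = fun i => (lam0 : Rb) + colv A 0 i := funext fun i => hv i
        rw [hveq, projPt_smul]
        exact ⟨inf_le_left, le_sup_left⟩
      · have hb0 : ¬((lam0 : Rb) + A 0 0 = ⊥ ∧ (lam0 : Rb) + A 1 0 = ⊥) := by
          have := smul_ne_zeroVec h0 lam0
          rw [ne_zeroVec_iff] at this
          exact fun ⟨ha, hb⟩ => this.elim (fun h => h ha) (fun h => h hb)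
        have hb1 : ¬((lam1 : Rb) + A 0 1 = ⊥ ∧ (lam1 : Rb) + A 1 1 = ⊥) := by
          have := smul_ne_zeroVec h1 lam1
          rw [ne_zeroVec_iff] at this
          exact fun ⟨ha, hb⟩ => this.elim (fun h => h ha) (fun h => h hb)
        have hproj : projPt v = toE (((lam0 : Rb) + A 1 0) ⊔ ((lam1 : Rb) + A 1 1))
            - toE (((lam0 : Rb) + A 0 0) ⊔ ((lam1 : Rb) + A 0 1)) := by
          rw [projPt_def, hc 0, hc 1]
        have hsm0 : toE ((lam0 : Rb) + A 1 0) - toE ((lam0 : Rb) + A 0 0)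
            = projPt (colv A 0) := by
          rw [← projPt_smul lam0 (colv A 0)]; rfl
        have hsm1 : toE ((lam1 : Rb) + A 1 1) - toE ((lam1 : Rb) + A 0 1)
            = projPt (colv A 1) := by
          rw [← projPt_smul lam1 (colv A 1)]; rfl
        constructor
        · rw [hproj, ← hsm0, ← hsm1]
          exact le_sup_proj hb0 hb1
        · rw [hproj, ← hsm0, ← hsm1]
          exact sup_proj_le hb0 hb1
  · intro hz
    rcases le_total (projPt (colv A 0)) (projPt (colv A 1)) with hab | hab
    · rw [inf_eq_left.2 hab, sup_eq_right.2 hab] at hz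
      obtain ⟨c0, c1, hnz, hproj⟩ := combo_aux (col_ne_iff.1 h0) (col_ne_iff.1 h1) hz.1 hz.2
      refine ⟨fun i => (c0 + A i 0) ⊔ (c1 + A i 1), mem_colSpace.2 ⟨c0, c1, fun i => rfl⟩,
        ?_, hproj⟩
      rw [ne_zeroVec_iff]
      by_contra hcon
      push_neg at hcon
      exact hnz ⟨hcon.1, hcon.2⟩
    · rw [inf_eq_right.2 hab, sup_eq_left.2 hab] at hz
      obtain ⟨c0, c1, hnz, hproj⟩ := combo_aux (col_ne_iff.1 h1) (col_ne_iff.1 h0) hz.1 hz.2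
      refine ⟨fun i => (c1 + A i 0) ⊔ (c0 + A i 1), mem_colSpace.2 ⟨c1, c0, fun i => rfl⟩,
        ?_, ?_⟩
      · rw [ne_zeroVec_iff]
        by_contra hcon
        push_neg at hcon
        refine hnz ⟨?_, ?_⟩
        · rw [sup_comm]; exact hcon.1
        · rw [sup_comm]; exact hcon.2
      · show toE ((c1 + A 1 0) ⊔ (c0 + A 1 1)) - toE ((c1 + A 0 0) ⊔ (c0 + A 0 1)) = z
        rw [sup_comm (c1 + A 1 0), sup_comm (c1 + A 0 0)]
        exact hproj

lemma mat0_cols {A : Mat2} (h0 : colv A 0 = zeroVec) (h1 : colv A 1 = zeroVec) : A = mat0 := by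
  funext i j
  fin_cases j
  · exact congrFun h0 i
  · exact congrFun h1 i

lemma PC_shape {A : Mat2} (hA : A ≠ mat0) :
    ∃ p q : EReal, p ≤ q ∧ PC A = Set.Icc p q := by
  by_cases h0 : colv A 0 = zeroVec
  · by_cases h1 : colv A 1 = zeroVec
    · exact absurd (mat0_cols h0 h1) hA
    · exact ⟨projPt (colv A 1), projPt (colv A 1), le_rfl, by rw [PC_single' h0 h1, Set.Icc_self]⟩
  · by_cases h1 : colv A 1 = zeroVec
    · exact ⟨projPt (colv A 0), projPt (colv A 0), le_rfl, by rw [PC_single h0 h1, Set.Icc_self]⟩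
    · exact ⟨_, _, inf_le_sup, PC_both h0 h1⟩

lemma PC_empty_iff {A : Mat2} : PC A = ∅ ↔ A = mat0 := by
  constructor
  · intro h
    by_contra hA
    obtain ⟨p, q, hpq, hPC⟩ := PC_shape hA
    rw [hPC] at h
    exact (Set.nonempty_Icc.2 hpq).ne_empty h
  · rintro rfl; exact PC_mat0

/-! ### realization -/

lemma exists_vec_proj (p : EReal) : ∃ v : Fin 2 → Rb, v ≠ zeroVec ∧ projPt v = p := by
  induction p using EReal.rec with
  | bot => exact ⟨vec ((0:ℝ) : Rb) ⊥, by rw [ne_zeroVec_iff]; left; exact WithBot.coe_ne_bot,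
      proj_vec_coe_bot 0⟩
  | top => exact ⟨vec ⊥ ((0:ℝ) : Rb), by rw [ne_zeroVec_iff]; right; exact WithBot.coe_ne_bot,
      proj_vec_bot_coe 0⟩
  | coe r => exact ⟨vec ((0:ℝ) : Rb) ((r:ℝ) : Rb),
      by rw [ne_zeroVec_iff]; left; exact WithBot.coe_ne_bot,
      by rw [proj_vec_coe_coe]; norm_num⟩

lemma exists_mat_PC {p q : EReal} (hpq : p ≤ q) : ∃ X : Mat2, PC X = Set.Icc p q := by
  obtain ⟨vp, hvp0, hvpp⟩ := exists_vec_proj p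
  obtain ⟨vq, hvq0, hvqp⟩ := exists_vec_proj q
  refine ⟨fun i j => if j = 0 then vp i else vq i, ?_⟩
  have hc0 : colv (fun i j => if j = 0 then vp i else vq i) 0 = vp := by
    funext i; simp [colv]
  have hc1 : colv (fun i j => if j = 0 then vp i else vq i) 1 = vq := by
    funext i; simp [colv]
  rw [PC_both (by rw [hc0]; exact hvp0) (by rw [hc1]; exact hvq0), hc0, hc1, hvpp, hvqp,
    inf_eq_left.2 hpq, sup_eq_right.2 hpq]

/-! ### factorization machinery -/

lemma not_both_bot {v : Fin 2 → Rb} (hv : v ≠ zeroVec) : ¬(v 0 = ⊥ ∧ v 1 = ⊥) := by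
  rw [ne_zeroVec_iff] at hv
  exact fun ⟨h0, h1⟩ => hv.elim (fun h => h h0) (fun h => h h1)

lemma eq_smul_of_projPt_eq {u v : Fin 2 → Rb} (hu : u ≠ zeroVec) (hv : v ≠ zeroVec)
    (h : projPt u = projPt v) : ∃ lam : ℝ, u = fun i => (lam : Rb) + v i := by
  obtain ⟨lam, h0, h1⟩ := prop_aux (not_both_bot hu) (not_both_bot hv) h
  exact ⟨lam, by rw [vec_ext_iff]; exact ⟨h0, h1⟩⟩

lemma mem_colSpace_of_proj {A : Mat2} {v : Fin 2 → Rb} (hv : v ≠ zeroVec)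
    (h : projPt v ∈ PC A) : v ∈ ColSpace A := by
  obtain ⟨w, hwC, hw0, hwp⟩ := h
  obtain ⟨lam, hlam⟩ := eq_smul_of_projPt_eq hv hw0 (by rw [hwp])
  rw [hlam]
  exact smul_mem_colSpace hwC _

def app (X : Mat2) (v : Fin 2 → Rb) : Fin 2 → Rb :=
  fun i => (X i 0 + v 0) ⊔ (X i 1 + v 1)

lemma tMul_col (X M : Mat2) (i j : Fin 2) : tMul X M i j = app X (colv M j) i := by
  rw [tMul_apply]; rfl

lemma app_smul (X : Mat2) (lam : Rb) (v : Fin 2 → Rb) :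
    app X (fun i => lam + v i) = fun i => lam + app X v i := by
  funext i
  show (X i 0 + (lam + v 0)) ⊔ (X i 1 + (lam + v 1)) = lam + ((X i 0 + v 0) ⊔ (X i 1 + v 1))
  rw [← max_add_add_left, add_left_comm (X i 0) lam, add_left_comm (X i 1) lam]

lemma tMul_assoc (X A Y : Mat2) : tMul (tMul X A) Y = tMul X (tMul A Y) := by
  funext i j
  simp only [tMul_apply, ← max_add_add_right, ← max_add_add_left, add_assoc]
  exact sup_sup_sup_comm _ _ _ _

lemma exists_Y {A : Mat2} (w : Fin 2 → (Fin 2 → Rb)) (hw : ∀ j, w j ∈ ColSpace A) :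
    ∃ Y : Mat2, ∀ i j, tMul A Y i j = w j i := by
  have h := fun j => mem_colSpace.1 (hw j)
  choose c0 c1 hc using h
  refine ⟨fun k j => if k = 0 then c0 j else c1 j, fun i j => ?_⟩
  rw [tMul_apply]
  rw [if_pos rfl, if_neg (by decide : ¬(1 : Fin 2) = 0)]
  rw [hc j i, add_comm (c0 j), add_comm (c1 j)]

lemma rb_cancel_addneg (x : Rb) (c : ℝ) : (x + ((-c : ℝ) : Rb)) + (c : Rb) = x := by
  rcases Rb.cases x with rfl | ⟨r, rfl⟩
  · rw [WithBot.bot_add, WithBot.bot_add]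
  · rw [rb_add, rb_add]; norm_num

lemma rb_cancel_negadd' (c : ℝ) (x : Rb) : ((c : ℝ) : Rb) + (x + ((-c : ℝ) : Rb)) = x := by
  rcases Rb.cases x with rfl | ⟨r, rfl⟩
  · rw [WithBot.bot_add, WithBot.add_bot]
  · rw [rb_add, rb_add]; norm_num

lemma rb_cancel_negadd (c : ℝ) (x : Rb) : ((-c : ℝ) : Rb) + (x + (c : Rb)) = x := by
  rcases Rb.cases x with rfl | ⟨r, rfl⟩
  · rw [WithBot.bot_add, WithBot.add_bot]
  · rw [rb_add, rb_add]; norm_num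

lemma app_onto {w : Fin 2 → Rb} (hw : w ≠ zeroVec) (t : Fin 2 → Rb) :
    ∃ X : Mat2, app X w = t := by
  rcases Rb.cases (w 0) with hw0 | ⟨om, hw0⟩
  · rcases Rb.cases (w 1) with hw1 | ⟨om, hw1⟩
    · exact absurd ⟨hw0, hw1⟩ (not_both_bot hw)
    · refine ⟨fun i k => if k = 1 then t i + ((-om : ℝ) : Rb) else ⊥, ?_⟩
      funext i
      show (⊥ + w 0) ⊔ ((t i + ((-om : ℝ) : Rb)) + w 1) = t i
      rw [hw1, WithBot.bot_add, bot_sup_eq, rb_cancel_addneg]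
  · refine ⟨fun i k => if k = 0 then t i + ((-om : ℝ) : Rb) else ⊥, ?_⟩
    funext i
    show ((t i + ((-om : ℝ) : Rb)) + w 0) ⊔ (⊥ + w 1) = t i
    rw [hw0, WithBot.bot_add, sup_bot_eq, rb_cancel_addneg]

/-- factorization through `A` collapsing to a single projective point `p` -/
lemma exists_factor_collapse {A B : Mat2} (hA : A ≠ mat0) {p : EReal}
    (h : ∀ j, colv B j = zeroVec ∨ projPt (colv B j) = p) :
    ∃ X Y : Mat2, B = tMul (tMul X A) Y := by
  have hne : PC A ≠ ∅ := fun hPC => hA (PC_empty_iff.1 hPC)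
  obtain ⟨z, w, hwC, hw0, -⟩ := Set.nonempty_iff_ne_empty.2 hne
  obtain ⟨vp, hvp0, hvpp⟩ := exists_vec_proj p
  obtain ⟨X, hX⟩ := app_onto hw0 vp
  have hlam : ∀ j, ∃ lam : Rb, ∀ i, B i j = lam + vp i := by
    intro j
    by_cases hz : colv B j = zeroVec
    · exact ⟨⊥, fun i => (congrFun hz i).trans (WithBot.bot_add _).symm⟩
    · rcases h j with hcon | hp
      · exact absurd hcon hz
      · obtain ⟨lam, hlam⟩ := eq_smul_of_projPt_eq hz hvp0 (by rw [hp, hvpp])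
        exact ⟨(lam : Rb), fun i => congrFun hlam i⟩
  choose lam hlam using hlam
  obtain ⟨Y, hY⟩ := exists_Y (fun j => fun i => lam j + w i)
    (fun j => smul_mem_colSpace hwC (lam j))
  refine ⟨X, Y, ?_⟩
  rw [tMul_assoc]
  funext i j
  rw [tMul_col, show colv (tMul A Y) j = fun i => lam j + w i from funext fun i => hY i j,
    app_smul, hX, hlam j i]

/-- shifting the second coordinate shifts the projective point -/
lemma proj_shift (a b : Rb) (c : ℝ) :
    toE (b + (c : Rb)) - toE a = (toE b - toE a) + (c : EReal) := by
  rcases Rb.cases a with rfl | ⟨A, rfl⟩ <;> rcases Rb.cases b with rfl | ⟨B, rfl⟩ <;>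
    simp only [WithBot.bot_add, rb_add, toE_bot, toE_coe, EReal.bot_sub, EReal.coe_sub_bot,
      toE_sub_coe]
  · simp
  · simp
  · simp
  · norm_cast; ring
lemma proj_reflect {a b : Rb} (c : ℝ) (hab : ¬(a = ⊥ ∧ b = ⊥)) :
    toE a - toE (b + ((-c : ℝ) : Rb)) = (-(toE b - toE a)) + (c : EReal) := by
  rcases Rb.cases a with rfl | ⟨A, rfl⟩ <;> rcases Rb.cases b with rfl | ⟨B, rfl⟩ <;>
    simp only [WithBot.bot_add, rb_add, toE_bot, toE_coe, EReal.bot_sub, EReal.coe_sub_bot,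
      toE_sub_coe]
  · exact absurd ⟨rfl, rfl⟩ hab
  · simp
  · simp
  · norm_cast; ring

/-- factorization through `A` by a projective translation -/
lemma exists_factor_translate {A B : Mat2} (c : ℝ)
    (h : ∀ j, colv B j = zeroVec ∨ projPt (colv B j) + (c : EReal) ∈ PC A) :
    ∃ X Y : Mat2, B = tMul (tMul X A) Y := by
  set w : Fin 2 → (Fin 2 → Rb) := fun j => vec (B 0 j) (B 1 j + (c : Rb)) with hw
  have hwC : ∀ j, w j ∈ ColSpace A := by
    intro j
    by_cases hz : colv B j = zeroVec
    · have h0 : B 0 j = ⊥ := congrFun hz 0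
      have h1 : B 1 j = ⊥ := congrFun hz 1
      have : w j = zeroVec := by
        funext i; fin_cases i
        · show B 0 j = ⊥; exact h0
        · show B 1 j + (c : Rb) = ⊥; rw [h1, WithBot.bot_add]
      rw [this]; exact zeroVec_mem_colSpace A
    · rcases h j with hcon | hp
      · exact absurd hcon hz
      · have hwnz : w j ≠ zeroVec := by
          rw [ne_zeroVec_iff]
          rcases not_both_bot hz |> fun hh => hh with hh
          by_contra hcon2
          push_neg at hcon2
          have h0 : B 0 j = ⊥ := hcon2.1
          have h1 : B 1 j + (c : Rb) = ⊥ := hcon2.2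
          apply hh
          refine ⟨h0, ?_⟩
          rcases Rb.cases (B 1 j) with hb | ⟨r, hb⟩
          · exact hb
          · rw [hb, rb_add] at h1; exact absurd h1 WithBot.coe_ne_bot
        have hproj : projPt (w j) = projPt (colv B j) + (c : EReal) := by
          show toE (B 1 j + (c : Rb)) - toE (B 0 j) = _
          exact proj_shift (B 0 j) (B 1 j) c
        exact mem_colSpace_of_proj hwnz (by rw [hproj]; exact hp)
  obtain ⟨Y, hY⟩ := exists_Y w hwC
  refine ⟨fun i k => if i = 0 then (if k = 0 then ((0:ℝ) : Rb) else ⊥)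
    else (if k = 0 then ⊥ else ((-c : ℝ) : Rb)), Y, ?_⟩
  rw [tMul_assoc]
  funext i j
  rw [tMul_col, show colv (tMul A Y) j = w j from funext fun i => hY i j]
  fin_cases i
  · show B 0 j = (((0:ℝ) : Rb) + w j 0) ⊔ (⊥ + w j 1)
    rw [rb_zero_add, WithBot.bot_add, sup_bot_eq]; rfl
  · show B 1 j = (⊥ + w j 0) ⊔ (((-c : ℝ) : Rb) + w j 1)
    rw [WithBot.bot_add, bot_sup_eq]
    exact (rb_cancel_negadd c (B 1 j)).symm

/-- factorization through `A` by a projective reflection -/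
lemma exists_factor_reflect {A B : Mat2} (c : ℝ)
    (h : ∀ j, colv B j = zeroVec ∨ (-(projPt (colv B j))) + (c : EReal) ∈ PC A) :
    ∃ X Y : Mat2, B = tMul (tMul X A) Y := by
  set w : Fin 2 → (Fin 2 → Rb) := fun j => vec (B 1 j + ((-c : ℝ) : Rb)) (B 0 j) with hw
  have hwC : ∀ j, w j ∈ ColSpace A := by
    intro j
    by_cases hz : colv B j = zeroVec
    · have h0 : B 0 j = ⊥ := congrFun hz 0
      have h1 : B 1 j = ⊥ := congrFun hz 1
      have : w j = zeroVec := by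
        funext i; fin_cases i
        · show B 1 j + ((-c : ℝ) : Rb) = ⊥; rw [h1, WithBot.bot_add]
        · show B 0 j = ⊥; exact h0
      rw [this]; exact zeroVec_mem_colSpace A
    · rcases h j with hcon | hp
      · exact absurd hcon hz
      · have hwnz : w j ≠ zeroVec := by
          rw [ne_zeroVec_iff]
          by_contra hcon2
          push_neg at hcon2
          have h1 : B 1 j + ((-c : ℝ) : Rb) = ⊥ := hcon2.1
          have h0 : B 0 j = ⊥ := hcon2.2
          apply not_both_bot hz
          refine ⟨h0, ?_⟩
          rcases Rb.cases (B 1 j) with hb | ⟨r, hb⟩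
          · exact hb
          · rw [hb, rb_add] at h1; exact absurd h1 WithBot.coe_ne_bot
        have hproj : projPt (w j) = (-(projPt (colv B j))) + (c : EReal) := by
          show toE (B 0 j) - toE (B 1 j + ((-c : ℝ) : Rb)) = _
          exact proj_reflect c (not_both_bot hz)
        exact mem_colSpace_of_proj hwnz (by rw [hproj]; exact hp)
  obtain ⟨Y, hY⟩ := exists_Y w hwC
  refine ⟨fun i k => if i = 0 then (if k = 0 then ⊥ else ((0:ℝ) : Rb))
    else (if k = 0 then ((c : ℝ) : Rb) else ⊥), Y, ?_⟩
  rw [tMul_assoc]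
  funext i j
  rw [tMul_col, show colv (tMul A Y) j = w j from funext fun i => hY i j]
  fin_cases i
  · show B 0 j = (⊥ + w j 0) ⊔ (((0:ℝ) : Rb) + w j 1)
    rw [WithBot.bot_add, bot_sup_eq, rb_zero_add]; rfl
  · show B 1 j = (((c : ℝ) : Rb) + w j 0) ⊔ (⊥ + w j 1)
    rw [WithBot.bot_add, sup_bot_eq]
    exact (rb_cancel_negadd' c (B 1 j)).symm

/-! ### embedding characterizations per shape -/

lemma ecoe_add (a b : ℝ) : ((a : EReal) + (b : EReal)) = ((a + b : ℝ) : EReal) :=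
  (EReal.coe_add a b).symm

lemma ebot_addc (c : ℝ) : ((⊥ : EReal) + (c : EReal)) = ⊥ := by simp
lemma etop_addc (c : ℝ) : ((⊤ : EReal) + (c : EReal)) = ⊤ := by simp

lemma emb_iff_empty {p q : EReal} (hpq : p ≤ q) :
    IsomEmbed (Set.Icc p q) ∅ ↔ False :=
  iff_false_intro (not_embed_nonempty_empty hpq)

lemma emb_iff_singleton {p q : EReal} (hpq : p ≤ q) (a : EReal) :
    IsomEmbed (Set.Icc p q) {a} ↔ p = q := by
  constructor
  · intro h
    by_contra hne
    exact not_embed_pair_singleton (lt_of_le_of_ne hpq hne) a h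
  · rintro rfl
    exact isomEmbed_singleton p ⟨a, rfl⟩

lemma emb_iff_Icc {p q : EReal} (hpq : p ≤ q) {x y : ℝ} (hxy : x < y) :
    IsomEmbed (Set.Icc p q) (Set.Icc (x : EReal) y) ↔
      p = q ∨ ∃ p' q' : ℝ, p = (p' : EReal) ∧ q = (q' : EReal) ∧ q' - p' ≤ y - x := by
  constructor
  · intro h
    rcases eq_or_lt_of_le hpq with heq | hlt
    · exact Or.inl heq
    · exact Or.inr (embed_Icc_extract hlt h)
  · rintro (rfl | ⟨p', q', rfl, rfl, hle⟩)
    · exact isomEmbed_singleton p ⟨(x : EReal), le_rfl, le_of_lt (by exact_mod_cast hxy)⟩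
    · refine isomEmbed_translate (x - p') ?_ ?_
      · rw [ecoe_add]; norm_num
      · rw [ecoe_add]
        exact EReal.coe_le_coe_iff.2 (by linarith)

lemma emb_iff_Ioo {p q : EReal} (hpq : p ≤ q) {x y : ℝ} (hxy : x < y) :
    IsomEmbed (Set.Icc p q) (Set.Ioo (x : EReal) y) ↔
      p = q ∨ ∃ p' q' : ℝ, p = (p' : EReal) ∧ q = (q' : EReal) ∧ q' - p' < y - x := by
  constructor
  · intro h
    rcases eq_or_lt_of_le hpq with heq | hlt
    · exact Or.inl heq
    · exact Or.inr (embed_Ioo_extract hlt h)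
  · rintro (rfl | ⟨p', q', rfl, rfl, hle⟩)
    · refine isomEmbed_singleton p ⟨(((x + y) / 2 : ℝ) : EReal), ?_, ?_⟩
      · exact EReal.coe_lt_coe_iff.2 (by linarith)
      · exact EReal.coe_lt_coe_iff.2 (by linarith)
    · refine isomEmbed_translate_Ioo (x - p' + ((y - x) - (q' - p')) / 2) ?_ ?_
      · rw [ecoe_add]; exact EReal.coe_lt_coe_iff.2 (by linarith)
      · rw [ecoe_add]; exact EReal.coe_lt_coe_iff.2 (by linarith)

lemma emb_iff_line {p q : EReal} (hpq : p ≤ q) :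
    IsomEmbed (Set.Icc p q) (Set.Ioo (⊥ : EReal) ⊤) ↔
      p = q ∨ ∃ p' q' : ℝ, p = (p' : EReal) ∧ q = (q' : EReal) := by
  constructor
  · intro h
    rcases eq_or_lt_of_le hpq with heq | hlt
    · exact Or.inl heq
    · exact Or.inr (embed_line_extract hlt h)
  · rintro (rfl | ⟨p', q', rfl, rfl⟩)
    · exact isomEmbed_singleton p ⟨((0:ℝ) : EReal), EReal.bot_lt_coe 0, EReal.coe_lt_top 0⟩
    · refine isomEmbed_translate_Ioo 0 ?_ ?_
      · rw [ecoe_add]; exact EReal.bot_lt_coe _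
      · rw [ecoe_add]; exact EReal.coe_lt_top _

lemma emb_iff_ray_lo {p q : EReal} (hpq : p ≤ q) (r : ℝ) :
    IsomEmbed (Set.Icc p q) (Set.Icc (⊥ : EReal) (r : EReal)) ↔ ¬(p = ⊥ ∧ q = ⊤) := by
  constructor
  · rintro h ⟨rfl, rfl⟩
    exact not_embed_full_ray_lo r h
  · intro hnf
    induction q using EReal.rec with
    | bot =>
      have : p = ⊥ := le_bot_iff.1 hpq
      subst this
      exact isomEmbed_singleton ⊥ ⟨⊥, le_rfl, bot_le⟩
    | coe q' =>
      induction p using EReal.rec with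
      | bot =>
        refine isomEmbed_translate (r - q') bot_le ?_
        rw [ecoe_add]; norm_num
      | coe p' =>
        refine isomEmbed_translate (r - q') bot_le ?_
        rw [ecoe_add]; norm_num
      | top => exact absurd (top_le_iff.1 hpq) (EReal.coe_ne_top q')
    | top =>
      induction p using EReal.rec with
      | bot => exact absurd ⟨rfl, rfl⟩ hnf
      | coe p' =>
        refine isomEmbed_reflect (r + p') ?_ ?_
        · rw [show -(⊤ : EReal) = ⊥ by simp, ebot_addc]
        · rw [show -((p' : EReal)) = ((-p' : ℝ) : EReal) by norm_cast, ecoe_add]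
          norm_num
      | top => exact isomEmbed_singleton ⊤ ⟨((r : ℝ) : EReal), bot_le, le_rfl⟩

lemma emb_iff_ray_hi {p q : EReal} (hpq : p ≤ q) (r : ℝ) :
    IsomEmbed (Set.Icc p q) (Set.Icc (r : EReal) (⊤ : EReal)) ↔ ¬(p = ⊥ ∧ q = ⊤) := by
  constructor
  · rintro h ⟨rfl, rfl⟩
    exact not_embed_full_ray_hi r h
  · intro hnf
    induction p using EReal.rec with
    | top =>
      have : q = ⊤ := top_le_iff.1 hpq
      subst this
      exact isomEmbed_singleton ⊤ ⟨⊤, le_top, le_rfl⟩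
    | coe p' =>
      refine isomEmbed_translate (r - p') ?_ le_top
      rw [ecoe_add]; norm_num
    | bot =>
      induction q using EReal.rec with
      | top => exact absurd ⟨rfl, rfl⟩ hnf
      | coe q' =>
        refine isomEmbed_reflect (r + q') ?_ le_top
        rw [show -((q' : EReal)) = ((-q' : ℝ) : EReal) by norm_cast, ecoe_add]
        norm_num
      | bot => exact isomEmbed_singleton ⊥ ⟨((r : ℝ) : EReal), le_rfl, le_top⟩

lemma emb_iff_full {p q : EReal} :
    IsomEmbed (Set.Icc p q) (Set.Icc (⊥ : EReal) ⊤) ↔ True :=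
  iff_true_intro (isomEmbed_into_univ _)

/-! ### isometry constructions -/

lemma isom_refl (S : Set EReal) : Isom S S := ⟨id, Set.bijOn_id S, fun x _ y _ => rfl⟩

lemma isom_singleton (a b : EReal) : Isom {a} {b} := by
  refine ⟨fun _ => b, ⟨fun x _ => Set.mem_singleton_iff.2 rfl, ?_, ?_⟩, ?_⟩
  · intro x hx y hy _
    rw [Set.eq_of_mem_singleton hx, Set.eq_of_mem_singleton hy]
  · intro z hz
    exact ⟨a, Set.mem_singleton a, (Set.eq_of_mem_singleton hz).symm⟩
  · intro x hx y hy
    rw [Set.eq_of_mem_singleton hx, Set.eq_of_mem_singleton hy, delta_self, delta_self]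

lemma addc_cancel' (z : EReal) (c : ℝ) : (z + ((-c : ℝ) : EReal)) + (c : EReal) = z := by
  have := addc_cancel z (-c); rwa [neg_neg] at this

lemma addc_lt_addc {a b : EReal} (c : ℝ) (h : a < b) : a + (c : EReal) < b + (c : EReal) :=
  lt_of_le_of_ne (add_le_add_left h.le _) fun heq => (ne_of_lt h) (addc_inj c heq)

lemma isom_translate {p q p' q' : EReal} (c : ℝ) (hp : p + (c : EReal) = p')
    (hq : q + (c : EReal) = q') : Isom (Set.Icc p q) (Set.Icc p' q') := by
  refine ⟨fun z => z + (c : EReal), ⟨?_, ?_, ?_⟩, fun a _ b _ => delta_add_const a b c⟩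
  · intro z hz
    exact ⟨by rw [← hp]; exact add_le_add_left hz.1 _,
           by rw [← hq]; exact add_le_add_left hz.2 _⟩
  · exact fun a _ b _ h => addc_inj c h
  · intro w hw
    obtain ⟨h1, h2⟩ := hw
    rw [← hp] at h1; rw [← hq] at h2
    refine ⟨w + ((-c : ℝ) : EReal), ⟨?_, ?_⟩, addc_cancel' w c⟩
    · have := add_le_add_left h1 (((-c : ℝ) : EReal))
      rwa [addc_cancel] at this
    · have := add_le_add_left h2 (((-c : ℝ) : EReal))
      rwa [addc_cancel] at this

lemma isom_translate_Ioo {p q p' q' : EReal} (c : ℝ) (hp : p + (c : EReal) = p')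
    (hq : q + (c : EReal) = q') : Isom (Set.Ioo p q) (Set.Ioo p' q') := by
  refine ⟨fun z => z + (c : EReal), ⟨?_, ?_, ?_⟩, fun a _ b _ => delta_add_const a b c⟩
  · intro z hz
    exact ⟨by rw [← hp]; exact addc_lt_addc c hz.1,
           by rw [← hq]; exact addc_lt_addc c hz.2⟩
  · exact fun a _ b _ h => addc_inj c h
  · intro w hw
    obtain ⟨h1, h2⟩ := hw
    rw [← hp] at h1; rw [← hq] at h2
    refine ⟨w + ((-c : ℝ) : EReal), ⟨?_, ?_⟩, addc_cancel' w c⟩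
    · have := addc_lt_addc (-c) h1
      rwa [addc_cancel] at this
    · have := addc_lt_addc (-c) h2
      rwa [addc_cancel] at this

lemma isom_reflect {p q p' q' : EReal} (c : ℝ) (hp : -q + (c : EReal) = p')
    (hq : -p + (c : EReal) = q') : Isom (Set.Icc p q) (Set.Icc p' q') := by
  refine ⟨fun z => -z + (c : EReal), ⟨?_, ?_, ?_⟩,
    fun a _ b _ => by rw [delta_add_const, delta_neg]⟩
  · intro z hz
    exact ⟨by rw [← hp]; exact add_le_add_left (EReal.neg_le_neg_iff.2 hz.2) _,
           by rw [← hq]; exact add_le_add_left (EReal.neg_le_neg_iff.2 hz.1) _⟩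
  · exact fun a _ b _ h => eneg_inj (addc_inj c h)
  · intro w hw
    obtain ⟨h1, h2⟩ := hw
    rw [← hp] at h1; rw [← hq] at h2
    refine ⟨-(w + ((-c : ℝ) : EReal)), ⟨?_, ?_⟩, ?_⟩
    · have h3 := add_le_add_left h2 (((-c : ℝ) : EReal))
      rw [addc_cancel] at h3
      have h4 := EReal.neg_le_neg_iff.2 h3
      rwa [neg_neg] at h4
    · have h3 := add_le_add_left h1 (((-c : ℝ) : EReal))
      rw [addc_cancel] at h3
      have h4 := EReal.neg_le_neg_iff.2 h3
      rwa [neg_neg] at h4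
    · show -(-(w + ((-c : ℝ) : EReal))) + (c : EReal) = w
      rw [neg_neg, addc_cancel' w c]

/-! ### SS shape classification -/

lemma SS_cases {S : Set EReal} (hS : S ∈ SS) :
    S = ∅ ∨ (∃ a : EReal, S = {a}) ∨
    (∃ x y : ℝ, x < y ∧ S = Set.Icc (x : EReal) (y : EReal)) ∨
    (∃ r : ℝ, S = Set.Icc (⊥ : EReal) (r : EReal)) ∨
    (∃ r : ℝ, S = Set.Icc (r : EReal) (⊤ : EReal)) ∨
    S = Set.Icc (⊥ : EReal) ⊤ ∨
    (∃ x y : ℝ, x < y ∧ S = Set.Ioo (x : EReal) (y : EReal)) ∨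
    S = Set.Ioo (⊥ : EReal) ⊤ := by
  rcases hS with (rfl | ⟨x, y, hxy, rfl⟩) | ⟨x, y, hxy, rfl⟩ | rfl
  · exact Or.inl rfl
  · rcases eq_or_lt_of_le hxy with rfl | hlt
    · exact Or.inr (Or.inl ⟨x, Set.Icc_self x⟩)
    · right; right
      induction x using EReal.rec with
      | top => exact absurd (lt_of_lt_of_le hlt le_top) (lt_irrefl _)
      | bot =>
        induction y using EReal.rec with
        | bot => exact absurd hlt (lt_irrefl _)
        | coe r => exact Or.inr (Or.inl ⟨r, rfl⟩)
        | top => exact Or.inr (Or.inr (Or.inr (Or.inl rfl)))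
      | coe x' =>
        induction y using EReal.rec with
        | bot => exact absurd (lt_of_le_of_lt bot_le hlt) (lt_irrefl _)
        | coe y' => exact Or.inl ⟨x', y', by exact_mod_cast hlt, rfl⟩
        | top => exact Or.inr (Or.inr (Or.inl ⟨x', rfl⟩))
  · exact Or.inr (Or.inr (Or.inr (Or.inr (Or.inr (Or.inr (Or.inl ⟨x, y, hxy, rfl⟩))))))
  · exact Or.inr (Or.inr (Or.inr (Or.inr (Or.inr (Or.inr (Or.inr rfl))))))

/-! ### uniqueness within SS -/

lemma embpt {U : Set EReal} (h : U.Nonempty) (a : EReal) :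
    IsomEmbed (Set.Icc a a) U := isomEmbed_singleton a h

lemma ptne {U : Set EReal} {a : EReal} (h : IsomEmbed (Set.Icc a a) U) : U.Nonempty := by
  obtain ⟨f, hmaps, -, -⟩ := h
  exact ⟨f a, hmaps ⟨le_rfl, le_rfl⟩⟩

lemma SS_unique {S T : Set EReal} (hS : S ∈ SS) (hT : T ∈ SS)
    (hfam : ∀ p q : EReal, p ≤ q →
      (IsomEmbed (Set.Icc p q) S ↔ IsomEmbed (Set.Icc p q) T)) :
    Isom S T := by
  have hfam0 := hfam ((0:ℝ) : EReal) ((0:ℝ) : EReal) le_rfl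
  rcases SS_cases hS with rfl | ⟨a, rfl⟩ | ⟨x, y, hxy, rfl⟩ | ⟨r, rfl⟩ | ⟨r, rfl⟩ | rfl |
    ⟨x, y, hxy, rfl⟩ | rfl
  -- S = ∅
  · rcases Set.eq_empty_or_nonempty T with rfl | hTne
    · exact isom_refl ∅
    · exact absurd (hfam0.2 (embpt hTne _)) (not_embed_nonempty_empty le_rfl)
  -- S = {a}
  · have hTne : T.Nonempty := ptne (hfam0.1 (embpt (⟨a, rfl⟩ : Set.Nonempty {a}) _))
    rcases SS_cases hT with rfl | ⟨b, rfl⟩ | ⟨x, y, hxy, rfl⟩ | ⟨r, rfl⟩ | ⟨r, rfl⟩ | rfl |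
      ⟨x, y, hxy, rfl⟩ | rfl
    · exact absurd hTne (by simp)
    · exact isom_singleton a b
    · exfalso
      have hle : ((x:ℝ) : EReal) ≤ (y : EReal) := EReal.coe_le_coe_iff.2 hxy.le
      have h := (hfam _ _ hle).2 ((emb_iff_Icc hle hxy).2 (Or.inr ⟨x, y, rfl, rfl, by linarith⟩))
      rw [emb_iff_singleton hle] at h
      exact ne_of_lt hxy (by exact_mod_cast h)
    · exfalso
      have h := (hfam _ _ (bot_le : (⊥:EReal) ≤ (r : EReal))).2
        ((emb_iff_ray_lo bot_le r).2 (by rintro ⟨-, hh⟩; exact EReal.coe_ne_top r hh))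
      rw [emb_iff_singleton bot_le] at h
      exact EReal.bot_ne_coe _ h
    · exfalso
      have h := (hfam _ _ (le_top : (r : EReal) ≤ ⊤)).2
        ((emb_iff_ray_hi le_top r).2 (by rintro ⟨hh, -⟩; exact EReal.coe_ne_bot r hh))
      rw [emb_iff_singleton le_top] at h
      exact EReal.coe_ne_top r h
    · exfalso
      have h := (hfam _ _ (bot_le : (⊥:EReal) ≤ ⊤)).2 (emb_iff_full.2 trivial)
      rw [emb_iff_singleton bot_le] at h
      simp at h
    · exfalso
      have hle : ((x:ℝ) : EReal) ≤ (((x+y)/2 : ℝ) : EReal) := EReal.coe_le_coe_iff.2 (by linarith)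
      have h := (hfam _ _ hle).2 ((emb_iff_Ioo hle hxy).2
        (Or.inr ⟨x, (x+y)/2, rfl, rfl, by linarith⟩))
      rw [emb_iff_singleton hle] at h
      have : x = (x+y)/2 := by exact_mod_cast h
      linarith
    · exfalso
      have hle : ((0:ℝ) : EReal) ≤ ((1:ℝ) : EReal) := EReal.coe_le_coe_iff.2 (by norm_num)
      have h := (hfam _ _ hle).2 ((emb_iff_line hle).2 (Or.inr ⟨0, 1, rfl, rfl⟩))
      rw [emb_iff_singleton hle] at h
      have : (0:ℝ) = 1 := by exact_mod_cast h
      norm_num at this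
  -- S = Icc x y, finite
  · have hle : ((x:ℝ) : EReal) ≤ (y : EReal) := EReal.coe_le_coe_iff.2 hxy.le
    have hSne : (Set.Icc ((x:ℝ) : EReal) (y : EReal)).Nonempty := ⟨_, Set.left_mem_Icc.2 hle⟩
    rcases SS_cases hT with rfl | ⟨b, rfl⟩ | ⟨x', y', hxy', rfl⟩ | ⟨r, rfl⟩ | ⟨r, rfl⟩ | rfl |
      ⟨x', y', hxy', rfl⟩ | rfl
    · exact absurd (hfam0.1 (embpt hSne _)) (not_embed_nonempty_empty le_rfl)
    · exfalso
      have h := (hfam _ _ hle).1 ((emb_iff_Icc hle hxy).2 (Or.inr ⟨x, y, rfl, rfl, by linarith⟩))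
      rw [emb_iff_singleton hle] at h
      exact ne_of_lt hxy (by exact_mod_cast h)
    · -- T = Icc x' y'
      have hle' : ((x':ℝ) : EReal) ≤ (y' : EReal) := EReal.coe_le_coe_iff.2 hxy'.le
      have h1 := (hfam _ _ hle).1 ((emb_iff_Icc hle hxy).2 (Or.inr ⟨x, y, rfl, rfl, by linarith⟩))
      rw [emb_iff_Icc hle hxy'] at h1
      have h2 := (hfam _ _ hle').2
        ((emb_iff_Icc hle' hxy').2 (Or.inr ⟨x', y', rfl, rfl, by linarith⟩))
      rw [emb_iff_Icc hle' hxy] at h2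
      have hlen1 : y - x ≤ y' - x' := by
        rcases h1 with h | ⟨p', q', hp, hq, hP⟩
        · exact absurd (by exact_mod_cast h : x = y) (ne_of_lt hxy)
        · have hp' : p' = x := by exact_mod_cast hp.symm
          have hq' : q' = y := by exact_mod_cast hq.symm
          rw [hp', hq'] at hP; exact hP
      have hlen2 : y' - x' ≤ y - x := by
        rcases h2 with h | ⟨p', q', hp, hq, hP⟩
        · exact absurd (by exact_mod_cast h : x' = y') (ne_of_lt hxy')
        · have hp' : p' = x' := by exact_mod_cast hp.symm
          have hq' : q' = y' := by exact_mod_cast hq.symm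
          rw [hp', hq'] at hP; exact hP
      refine isom_translate (x' - x) ?_ ?_
      · rw [ecoe_add]; norm_num
      · rw [ecoe_add]; exact EReal.coe_eq_coe_iff.2 (by linarith)
    · exfalso
      have h := (hfam _ _ (bot_le : (⊥:EReal) ≤ (r : EReal))).2
        ((emb_iff_ray_lo bot_le r).2 (by rintro ⟨-, hh⟩; exact EReal.coe_ne_top r hh))
      rw [emb_iff_Icc bot_le hxy] at h
      rcases h with h | ⟨p', q', hp, -, -⟩
      · exact EReal.bot_ne_coe _ h
      · exact EReal.bot_ne_coe _ hp
    · exfalso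
      have h := (hfam _ _ (le_top : (r : EReal) ≤ ⊤)).2
        ((emb_iff_ray_hi le_top r).2 (by rintro ⟨hh, -⟩; exact EReal.coe_ne_bot r hh))
      rw [emb_iff_Icc le_top hxy] at h
      rcases h with h | ⟨p', q', -, hq, -⟩
      · exact EReal.coe_ne_top r h
      · exact EReal.top_ne_coe _ hq
    · exfalso
      have h := (hfam _ _ (bot_le : (⊥:EReal) ≤ ⊤)).2 (emb_iff_full.2 trivial)
      rw [emb_iff_Icc bot_le hxy] at h
      rcases h with h | ⟨p', q', hp, -, -⟩
      · simp at h
      · exact EReal.bot_ne_coe _ hp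
    · -- T = Ioo x' y'
      exfalso
      rcases lt_or_ge (y - x) (y' - x') with hlt | hge
      · set m := ((y - x) + (y' - x')) / 2 with hm
        have hm0 : (0:ℝ) ≤ m := by
          have : 0 < y - x := by linarith
          simp only [hm]; linarith
        have hlem : ((0:ℝ) : EReal) ≤ (m : EReal) := EReal.coe_le_coe_iff.2 hm0
        have h := (hfam _ _ hlem).2 ((emb_iff_Ioo hlem hxy').2
          (Or.inr ⟨0, m, rfl, rfl, by simp only [hm]; linarith⟩))
        rw [emb_iff_Icc hlem hxy] at h
        rcases h with h | ⟨p', q', hp, hq, hP⟩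
        · have : (0:ℝ) = m := by exact_mod_cast h
          simp only [hm] at this; linarith
        · have hp' : p' = 0 := by exact_mod_cast hp.symm
          have hq' : q' = m := by exact_mod_cast hq.symm
          rw [hp', hq'] at hP; simp only [hm] at hP; linarith
      · have h := (hfam _ _ hle).1
          ((emb_iff_Icc hle hxy).2 (Or.inr ⟨x, y, rfl, rfl, by linarith⟩))
        rw [emb_iff_Ioo hle hxy'] at h
        rcases h with h | ⟨p', q', hp, hq, hP⟩
        · exact ne_of_lt hxy (by exact_mod_cast h)
        · have hp' : p' = x := by exact_mod_cast hp.symm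
          have hq' : q' = y := by exact_mod_cast hq.symm
          rw [hp', hq'] at hP; linarith
    · -- T = line
      exfalso
      have hlem : ((0:ℝ) : EReal) ≤ ((y - x + 1 : ℝ) : EReal) :=
        EReal.coe_le_coe_iff.2 (by linarith)
      have h := (hfam _ _ hlem).2 ((emb_iff_line hlem).2 (Or.inr ⟨0, y - x + 1, rfl, rfl⟩))
      rw [emb_iff_Icc hlem hxy] at h
      rcases h with h | ⟨p', q', hp, hq, hP⟩
      · have : (0:ℝ) = y - x + 1 := by exact_mod_cast h
        linarith
      · have hp' : p' = 0 := by exact_mod_cast hp.symm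
        have hq' : q' = y - x + 1 := by exact_mod_cast hq.symm
        rw [hp', hq'] at hP; linarith
  -- S = Icc ⊥ r (ray low)
  · have hSne : (Set.Icc (⊥:EReal) (r : EReal)).Nonempty := ⟨⊥, le_rfl, bot_le⟩
    have hSray : IsomEmbed (Set.Icc (⊥:EReal) (r : EReal)) (Set.Icc (⊥:EReal) (r : EReal)) :=
      (emb_iff_ray_lo bot_le r).2 (by rintro ⟨-, hh⟩; exact EReal.coe_ne_top r hh)
    rcases SS_cases hT with rfl | ⟨b, rfl⟩ | ⟨x', y', hxy', rfl⟩ | ⟨r', rfl⟩ | ⟨r', rfl⟩ | rfl |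
      ⟨x', y', hxy', rfl⟩ | rfl
    · exact absurd (hfam0.1 (embpt hSne _)) (not_embed_nonempty_empty le_rfl)
    · exfalso
      have h := (hfam _ _ (bot_le : (⊥:EReal) ≤ (r : EReal))).1 hSray
      rw [emb_iff_singleton bot_le] at h
      exact EReal.bot_ne_coe _ h
    · exfalso
      have h := (hfam _ _ (bot_le : (⊥:EReal) ≤ (r : EReal))).1 hSray
      rw [emb_iff_Icc bot_le hxy'] at h
      rcases h with h | ⟨p', q', hp, -, -⟩
      · exact EReal.bot_ne_coe _ h
      · exact EReal.bot_ne_coe _ hp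
    · refine isom_translate (r' - r) (by simp) ?_
      rw [ecoe_add]; norm_num
    · refine isom_reflect (r + r') ?_ ?_
      · rw [show -((r:EReal)) = ((-r : ℝ) : EReal) by norm_cast, ecoe_add]
        norm_num
      · rw [show -(⊥ : EReal) = ⊤ by simp, etop_addc]
    · exfalso
      have h := (hfam _ _ (bot_le : (⊥:EReal) ≤ ⊤)).2 (emb_iff_full.2 trivial)
      rw [emb_iff_ray_lo bot_le r] at h
      exact h ⟨rfl, rfl⟩
    · exfalso
      have h := (hfam _ _ (bot_le : (⊥:EReal) ≤ (r : EReal))).1 hSray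
      rw [emb_iff_Ioo bot_le hxy'] at h
      rcases h with h | ⟨p', q', hp, -, -⟩
      · exact EReal.bot_ne_coe _ h
      · exact EReal.bot_ne_coe _ hp
    · exfalso
      have h := (hfam _ _ (bot_le : (⊥:EReal) ≤ (r : EReal))).1 hSray
      rw [emb_iff_line bot_le] at h
      rcases h with h | ⟨p', q', hp, -⟩
      · exact EReal.bot_ne_coe _ h
      · exact EReal.bot_ne_coe _ hp
  -- S = Icc r ⊤ (ray high)
  · have hSne : (Set.Icc ((r:ℝ) : EReal) (⊤:EReal)).Nonempty := ⟨⊤, le_top, le_rfl⟩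
    have hSray : IsomEmbed (Set.Icc ((r:ℝ) : EReal) (⊤:EReal)) (Set.Icc ((r:ℝ) : EReal) ⊤) :=
      (emb_iff_ray_hi le_top r).2 (by rintro ⟨hh, -⟩; exact EReal.coe_ne_bot r hh)
    rcases SS_cases hT with rfl | ⟨b, rfl⟩ | ⟨x', y', hxy', rfl⟩ | ⟨r', rfl⟩ | ⟨r', rfl⟩ | rfl |
      ⟨x', y', hxy', rfl⟩ | rfl
    · exact absurd (hfam0.1 (embpt hSne _)) (not_embed_nonempty_empty le_rfl)
    · exfalso
      have h := (hfam _ _ (le_top : ((r:ℝ) : EReal) ≤ ⊤)).1 hSray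
      rw [emb_iff_singleton le_top] at h
      exact EReal.coe_ne_top r h
    · exfalso
      have h := (hfam _ _ (le_top : ((r:ℝ) : EReal) ≤ ⊤)).1 hSray
      rw [emb_iff_Icc le_top hxy'] at h
      rcases h with h | ⟨p', q', -, hq, -⟩
      · exact EReal.coe_ne_top r h
      · exact EReal.top_ne_coe _ hq
    · refine isom_reflect (r + r') ?_ ?_
      · rw [show -(⊤ : EReal) = ⊥ by simp, ebot_addc]
      · rw [show -((r:EReal)) = ((-r : ℝ) : EReal) by norm_cast, ecoe_add]
        norm_num
    · refine isom_translate (r' - r) ?_ (etop_addc _)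
      rw [ecoe_add]; norm_num
    · exfalso
      have h := (hfam _ _ (bot_le : (⊥:EReal) ≤ ⊤)).2 (emb_iff_full.2 trivial)
      rw [emb_iff_ray_hi bot_le r] at h
      exact h ⟨rfl, rfl⟩
    · exfalso
      have h := (hfam _ _ (le_top : ((r:ℝ) : EReal) ≤ ⊤)).1 hSray
      rw [emb_iff_Ioo le_top hxy'] at h
      rcases h with h | ⟨p', q', -, hq, -⟩
      · exact EReal.coe_ne_top r h
      · exact EReal.top_ne_coe _ hq
    · exfalso
      have h := (hfam _ _ (le_top : ((r:ℝ) : EReal) ≤ ⊤)).1 hSray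
      rw [emb_iff_line le_top] at h
      rcases h with h | ⟨p', q', -, hq⟩
      · exact EReal.coe_ne_top r h
      · exact EReal.top_ne_coe _ hq
  -- S = Icc ⊥ ⊤ (full)
  · have hSne : (Set.Icc (⊥:EReal) (⊤:EReal)).Nonempty := ⟨⊥, le_rfl, bot_le⟩
    have hSfull := (hfam _ _ (bot_le : (⊥:EReal) ≤ ⊤)).1 (emb_iff_full.2 trivial)
    rcases SS_cases hT with rfl | ⟨b, rfl⟩ | ⟨x', y', hxy', rfl⟩ | ⟨r', rfl⟩ | ⟨r', rfl⟩ | rfl |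
      ⟨x', y', hxy', rfl⟩ | rfl
    · exact absurd (hfam0.1 (embpt hSne _)) (not_embed_nonempty_empty le_rfl)
    · exfalso
      rw [emb_iff_singleton bot_le] at hSfull
      simp at hSfull
    · exfalso
      rw [emb_iff_Icc bot_le hxy'] at hSfull
      rcases hSfull with h | ⟨p', q', hp, -, -⟩
      · simp at h
      · exact EReal.bot_ne_coe _ hp
    · exfalso
      rw [emb_iff_ray_lo bot_le r'] at hSfull
      exact hSfull ⟨rfl, rfl⟩
    · exfalso
      rw [emb_iff_ray_hi bot_le r'] at hSfull
      exact hSfull ⟨rfl, rfl⟩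
    · exact isom_refl _
    · exfalso
      rw [emb_iff_Ioo bot_le hxy'] at hSfull
      rcases hSfull with h | ⟨p', q', hp, -, -⟩
      · simp at h
      · exact EReal.bot_ne_coe _ hp
    · exfalso
      rw [emb_iff_line bot_le] at hSfull
      rcases hSfull with h | ⟨p', q', hp, -⟩
      · simp at h
      · exact EReal.bot_ne_coe _ hp
  -- S = Ioo x y (open finite)
  · have hle : ((x:ℝ) : EReal) ≤ (y : EReal) := EReal.coe_le_coe_iff.2 hxy.le
    have hSne : (Set.Ioo ((x:ℝ) : EReal) (y : EReal)).Nonempty :=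
      ⟨(((x+y)/2 : ℝ) : EReal), EReal.coe_lt_coe_iff.2 (by linarith),
        EReal.coe_lt_coe_iff.2 (by linarith)⟩
    rcases SS_cases hT with rfl | ⟨b, rfl⟩ | ⟨x', y', hxy', rfl⟩ | ⟨r', rfl⟩ | ⟨r', rfl⟩ | rfl |
      ⟨x', y', hxy', rfl⟩ | rfl
    · exact absurd (hfam0.1 (embpt hSne _)) (not_embed_nonempty_empty le_rfl)
    · exfalso
      have hlem : ((x:ℝ) : EReal) ≤ (((x+y)/2 : ℝ) : EReal) := EReal.coe_le_coe_iff.2 (by linarith)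
      have h := (hfam _ _ hlem).1 ((emb_iff_Ioo hlem hxy).2
        (Or.inr ⟨x, (x+y)/2, rfl, rfl, by linarith⟩))
      rw [emb_iff_singleton hlem] at h
      have : x = (x+y)/2 := by exact_mod_cast h
      linarith
    · -- T = Icc x' y'
      exfalso
      rcases lt_or_ge (y' - x') (y - x) with hlt | hge
      · set m := ((y' - x') + (y - x)) / 2 with hm
        have hm0 : (0:ℝ) ≤ m := by simp only [hm]; linarith
        have hlem : ((0:ℝ) : EReal) ≤ (m : EReal) := EReal.coe_le_coe_iff.2 hm0
        have h := (hfam _ _ hlem).1 ((emb_iff_Ioo hlem hxy).2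
          (Or.inr ⟨0, m, rfl, rfl, by simp only [hm]; linarith⟩))
        rw [emb_iff_Icc hlem hxy'] at h
        rcases h with h | ⟨p', q', hp, hq, hP⟩
        · have h0 : (0:ℝ) = m := by exact_mod_cast h
          simp only [hm] at h0; linarith
        · have hp' : p' = 0 := by exact_mod_cast hp.symm
          have hq' : q' = m := by exact_mod_cast hq.symm
          rw [hp', hq'] at hP; simp only [hm] at hP; linarith
      · have hle' : ((x':ℝ) : EReal) ≤ (y' : EReal) := EReal.coe_le_coe_iff.2 hxy'.le
        have h := (hfam _ _ hle').2 ((emb_iff_Icc hle' hxy').2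
          (Or.inr ⟨x', y', rfl, rfl, by linarith⟩))
        rw [emb_iff_Ioo hle' hxy] at h
        rcases h with h | ⟨p', q', hp, hq, hP⟩
        · exact ne_of_lt hxy' (by exact_mod_cast h)
        · have hp' : p' = x' := by exact_mod_cast hp.symm
          have hq' : q' = y' := by exact_mod_cast hq.symm
          rw [hp', hq'] at hP; linarith
    · exfalso
      have h := (hfam _ _ (bot_le : (⊥:EReal) ≤ ((0:ℝ) : EReal))).2
        ((emb_iff_ray_lo bot_le r').2 (by rintro ⟨-, hh⟩; exact EReal.coe_ne_top 0 hh))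
      rw [emb_iff_Ioo bot_le hxy] at h
      rcases h with h | ⟨p', q', hp, -, -⟩
      · exact EReal.bot_ne_coe _ h
      · exact EReal.bot_ne_coe _ hp
    · exfalso
      have h := (hfam _ _ (le_top : ((0:ℝ) : EReal) ≤ ⊤)).2
        ((emb_iff_ray_hi le_top r').2 (by rintro ⟨hh, -⟩; exact EReal.coe_ne_bot 0 hh))
      rw [emb_iff_Ioo le_top hxy] at h
      rcases h with h | ⟨p', q', -, hq, -⟩
      · exact EReal.coe_ne_top 0 h
      · exact EReal.top_ne_coe _ hq
    · exfalso
      have h := (hfam _ _ (bot_le : (⊥:EReal) ≤ ⊤)).2 (emb_iff_full.2 trivial)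
      rw [emb_iff_Ioo bot_le hxy] at h
      rcases h with h | ⟨p', q', hp, -, -⟩
      · simp at h
      · exact EReal.bot_ne_coe _ hp
    · -- T = Ioo x' y'
      rcases lt_trichotomy (y - x) (y' - x') with hlt | heq | hgt
      · exfalso
        set m := ((y - x) + (y' - x')) / 2 with hm
        have hm0 : (0:ℝ) ≤ m := by simp only [hm]; linarith
        have hlem : ((0:ℝ) : EReal) ≤ (m : EReal) := EReal.coe_le_coe_iff.2 hm0
        have h := (hfam _ _ hlem).2 ((emb_iff_Ioo hlem hxy').2
          (Or.inr ⟨0, m, rfl, rfl, by simp only [hm]; linarith⟩))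
        rw [emb_iff_Ioo hlem hxy] at h
        rcases h with h | ⟨p', q', hp, hq, hP⟩
        · have h0 : (0:ℝ) = m := by exact_mod_cast h
          simp only [hm] at h0; linarith
        · have hp' : p' = 0 := by exact_mod_cast hp.symm
          have hq' : q' = m := by exact_mod_cast hq.symm
          rw [hp', hq'] at hP; simp only [hm] at hP; linarith
      · refine isom_translate_Ioo (x' - x) ?_ ?_
        · rw [ecoe_add]; norm_num
        · rw [ecoe_add]; exact EReal.coe_eq_coe_iff.2 (by linarith)
      · exfalso
        set m := ((y' - x') + (y - x)) / 2 with hm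
        have hm0 : (0:ℝ) ≤ m := by simp only [hm]; linarith
        have hlem : ((0:ℝ) : EReal) ≤ (m : EReal) := EReal.coe_le_coe_iff.2 hm0
        have h := (hfam _ _ hlem).1 ((emb_iff_Ioo hlem hxy).2
          (Or.inr ⟨0, m, rfl, rfl, by simp only [hm]; linarith⟩))
        rw [emb_iff_Ioo hlem hxy'] at h
        rcases h with h | ⟨p', q', hp, hq, hP⟩
        · have h0 : (0:ℝ) = m := by exact_mod_cast h
          simp only [hm] at h0; linarith
        · have hp' : p' = 0 := by exact_mod_cast hp.symm
          have hq' : q' = m := by exact_mod_cast hq.symm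
          rw [hp', hq'] at hP; simp only [hm] at hP; linarith
    · -- T = line
      exfalso
      have hlem : ((0:ℝ) : EReal) ≤ ((y - x : ℝ) : EReal) := EReal.coe_le_coe_iff.2 (by linarith)
      have h := (hfam _ _ hlem).2 ((emb_iff_line hlem).2 (Or.inr ⟨0, y - x, rfl, rfl⟩))
      rw [emb_iff_Ioo hlem hxy] at h
      rcases h with h | ⟨p', q', hp, hq, hP⟩
      · have h0 : (0:ℝ) = y - x := by exact_mod_cast h
        linarith
      · have hp' : p' = 0 := by exact_mod_cast hp.symm
        have hq' : q' = y - x := by exact_mod_cast hq.symm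
        rw [hp', hq'] at hP; linarith
  -- S = Ioo ⊥ ⊤ (line)
  · have hSne : (Set.Ioo (⊥:EReal) (⊤:EReal)).Nonempty :=
      ⟨((0:ℝ) : EReal), EReal.bot_lt_coe 0, EReal.coe_lt_top 0⟩
    rcases SS_cases hT with rfl | ⟨b, rfl⟩ | ⟨x', y', hxy', rfl⟩ | ⟨r', rfl⟩ | ⟨r', rfl⟩ | rfl |
      ⟨x', y', hxy', rfl⟩ | rfl
    · exact absurd (hfam0.1 (embpt hSne _)) (not_embed_nonempty_empty le_rfl)
    · exfalso
      have hlem : ((0:ℝ) : EReal) ≤ ((1:ℝ) : EReal) := EReal.coe_le_coe_iff.2 (by norm_num)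
      have h := (hfam _ _ hlem).1 ((emb_iff_line hlem).2 (Or.inr ⟨0, 1, rfl, rfl⟩))
      rw [emb_iff_singleton hlem] at h
      have : (0:ℝ) = 1 := by exact_mod_cast h
      norm_num at this
    · exfalso
      have hlem : ((0:ℝ) : EReal) ≤ ((y' - x' + 1 : ℝ) : EReal) :=
        EReal.coe_le_coe_iff.2 (by linarith)
      have h := (hfam _ _ hlem).1 ((emb_iff_line hlem).2 (Or.inr ⟨0, y' - x' + 1, rfl, rfl⟩))
      rw [emb_iff_Icc hlem hxy'] at h
      rcases h with h | ⟨p', q', hp, hq, hP⟩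
      · have h0 : (0:ℝ) = y' - x' + 1 := by exact_mod_cast h
        linarith
      · have hp' : p' = 0 := by exact_mod_cast hp.symm
        have hq' : q' = y' - x' + 1 := by exact_mod_cast hq.symm
        rw [hp', hq'] at hP; linarith
    · exfalso
      have h := (hfam _ _ (bot_le : (⊥:EReal) ≤ ((0:ℝ) : EReal))).2
        ((emb_iff_ray_lo bot_le r').2 (by rintro ⟨-, hh⟩; exact EReal.coe_ne_top 0 hh))
      rw [emb_iff_line bot_le] at h
      rcases h with h | ⟨p', q', hp, -⟩
      · exact EReal.bot_ne_coe _ h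
      · exact EReal.bot_ne_coe _ hp
    · exfalso
      have h := (hfam _ _ (le_top : ((0:ℝ) : EReal) ≤ ⊤)).2
        ((emb_iff_ray_hi le_top r').2 (by rintro ⟨hh, -⟩; exact EReal.coe_ne_bot 0 hh))
      rw [emb_iff_line le_top] at h
      rcases h with h | ⟨p', q', -, hq⟩
      · exact EReal.coe_ne_top 0 h
      · exact EReal.top_ne_coe _ hq
    · exfalso
      have h := (hfam _ _ (bot_le : (⊥:EReal) ≤ ⊤)).2 (emb_iff_full.2 trivial)
      rw [emb_iff_line bot_le] at h
      rcases h with h | ⟨p', q', hp, -⟩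
      · simp at h
      · exact EReal.bot_ne_coe _ hp
    · exfalso
      have hlem : ((0:ℝ) : EReal) ≤ ((y' - x' : ℝ) : EReal) := EReal.coe_le_coe_iff.2 (by linarith)
      have h := (hfam _ _ hlem).1 ((emb_iff_line hlem).2 (Or.inr ⟨0, y' - x', rfl, rfl⟩))
      rw [emb_iff_Ioo hlem hxy'] at h
      rcases h with h | ⟨p', q', hp, hq, hP⟩
      · have h0 : (0:ℝ) = y' - x' := by exact_mod_cast h
        linarith
      · have hp' : p' = 0 := by exact_mod_cast hp.symm
        have hq' : q' = y' - x' := by exact_mod_cast hq.symm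
        rw [hp', hq'] at hP; linarith
    · exact isom_refl _

/-! ### diameters and shapes -/

def dPC (A : Mat2) : ℝ≥0∞ := ⨆ a ∈ PC A, ⨆ b ∈ PC A, delta a b

lemma dPC_le {A : Mat2} {L : ℝ≥0∞} (h : ∀ a ∈ PC A, ∀ b ∈ PC A, delta a b ≤ L) :
    dPC A ≤ L :=
  iSup₂_le fun a ha => iSup₂_le fun b hb => h a ha b hb

lemma le_dPC {A : Mat2} {a b : EReal} (ha : a ∈ PC A) (hb : b ∈ PC A) :
    delta a b ≤ dPC A :=
  le_iSup₂_of_le a ha (le_iSup₂_of_le b hb le_rfl)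

lemma dPC_Icc_coe {A : Mat2} {p q : ℝ} (hpq : p ≤ q) (h : PC A = Set.Icc (p : EReal) q) :
    dPC A = ENNReal.ofReal (q - p) := by
  apply le_antisymm
  · apply dPC_le
    intro a ha b hb
    rw [h] at ha hb
    obtain ⟨a', rfl, ha1, ha2⟩ := mem_Icc_coe_coe ha
    obtain ⟨b', rfl, hb1, hb2⟩ := mem_Icc_coe_coe hb
    rw [delta_coe_coe]
    exact ENNReal.ofReal_le_ofReal (abs_sub_le_iff.2 ⟨by linarith, by linarith⟩)
  · have hp : (p : EReal) ∈ PC A := by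
      rw [h]; exact ⟨le_rfl, EReal.coe_le_coe_iff.2 hpq⟩
    have hq : (q : EReal) ∈ PC A := by
      rw [h]; exact ⟨EReal.coe_le_coe_iff.2 hpq, le_rfl⟩
    have hd := le_dPC hp hq
    rwa [delta_coe_coe, abs_sub_comm, abs_of_nonneg (by linarith)] at hd

lemma dPC_pt {A : Mat2} {p : EReal} (h : PC A = Set.Icc p p) : dPC A = 0 := by
  refine le_antisymm ?_ (zero_le)
  apply dPC_le
  intro a ha b hb
  rw [h, Set.Icc_self] at ha hb
  rw [Set.eq_of_mem_singleton ha, Set.eq_of_mem_singleton hb, delta_self]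

lemma dPC_mat0 : dPC mat0 = 0 := by
  refine le_antisymm ?_ (zero_le)
  apply dPC_le
  intro a ha
  rw [PC_mat0] at ha
  exact absurd ha (Set.notMem_empty a)

lemma endpoint_cases {p q : EReal} (hpq : p ≤ q) :
    p = q ∨ (∃ p' q' : ℝ, p = (p' : EReal) ∧ q = (q' : EReal) ∧ p' < q') ∨
    (∃ r : ℝ, p = ⊥ ∧ q = (r : EReal)) ∨ (∃ r : ℝ, p = (r : EReal) ∧ q = ⊤) ∨
    (p = ⊥ ∧ q = ⊤) := by
  rcases eq_or_lt_of_le hpq with rfl | hlt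
  · exact Or.inl rfl
  right
  induction p using EReal.rec with
  | top => exact absurd (lt_of_lt_of_le hlt le_top) (lt_irrefl _)
  | bot =>
    induction q using EReal.rec with
    | bot => exact absurd hlt (lt_irrefl _)
    | coe r => exact Or.inr (Or.inl ⟨r, rfl, rfl⟩)
    | top => exact Or.inr (Or.inr (Or.inr ⟨rfl, rfl⟩))
  | coe p' =>
    induction q using EReal.rec with
    | bot => exact absurd hlt not_lt_bot
    | coe q' => exact Or.inl ⟨p', q', rfl, rfl, by exact_mod_cast hlt⟩
    | top => exact Or.inr (Or.inr (Or.inl ⟨p', rfl, rfl⟩))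

/-! ### ideal membership via factorizations -/

lemma mem_of_PC_pt {I : Set Mat2} (hI : IsIdeal I) {A : Mat2} (hA : A ∈ I) (hA0 : A ≠ mat0)
    {X : Mat2} {p : EReal} (hX : PC X = Set.Icc p p) : X ∈ I := by
  have hcols : ∀ j, colv X j = zeroVec ∨ projPt (colv X j) = p := by
    intro j
    by_cases hz : colv X j = zeroVec
    · exact Or.inl hz
    · right
      have hm := mem_PC_of_col hz
      rw [hX, Set.Icc_self] at hm
      exact Set.mem_singleton_iff.1 hm
  obtain ⟨P, Q, hPQ⟩ := exists_factor_collapse (B := X) hA0 hcols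
  rw [hPQ]; exact hI.2 A hA P Q

lemma mem_of_translate {I : Set Mat2} (hI : IsIdeal I) {A : Mat2} (hA : A ∈ I)
    {X : Mat2} {p q u v : EReal} (hX : PC X = Set.Icc p q) (hA' : PC A = Set.Icc u v)
    (c : ℝ) (h1 : u ≤ p + (c : EReal)) (h2 : q + (c : EReal) ≤ v) : X ∈ I := by
  have hcols : ∀ j, colv X j = zeroVec ∨ projPt (colv X j) + (c : EReal) ∈ PC A := by
    intro j
    by_cases hz : colv X j = zeroVec
    · exact Or.inl hz
    · right
      have hm := mem_PC_of_col hz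
      rw [hX] at hm
      rw [hA']
      exact ⟨le_trans h1 (add_le_add_left hm.1 _), le_trans (add_le_add_left hm.2 _) h2⟩
  obtain ⟨P, Q, hPQ⟩ := exists_factor_translate (A := A) (B := X) c hcols
  rw [hPQ]; exact hI.2 A hA P Q

lemma mem_of_reflect {I : Set Mat2} (hI : IsIdeal I) {A : Mat2} (hA : A ∈ I)
    {X : Mat2} {p q u v : EReal} (hX : PC X = Set.Icc p q) (hA' : PC A = Set.Icc u v)
    (c : ℝ) (h1 : u ≤ -q + (c : EReal)) (h2 : -p + (c : EReal) ≤ v) : X ∈ I := by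
  have hcols : ∀ j, colv X j = zeroVec ∨ (-(projPt (colv X j))) + (c : EReal) ∈ PC A := by
    intro j
    by_cases hz : colv X j = zeroVec
    · exact Or.inl hz
    · right
      have hm := mem_PC_of_col hz
      rw [hX] at hm
      rw [hA']
      exact ⟨le_trans h1 (add_le_add_left (EReal.neg_le_neg_iff.2 hm.2) _),
        le_trans (add_le_add_left (EReal.neg_le_neg_iff.2 hm.1) _) h2⟩
  obtain ⟨P, Q, hPQ⟩ := exists_factor_reflect (A := A) (B := X) c hcols
  rw [hPQ]; exact hI.2 A hA P Q

lemma shape_in_ideal {I : Set Mat2}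
    (hfull : ¬∃ A ∈ I, PC A = Set.Icc (⊥ : EReal) ⊤)
    (hray : ¬∃ A ∈ I, ∃ r : ℝ, PC A = Set.Icc (⊥ : EReal) (r : EReal) ∨
      PC A = Set.Icc (r : EReal) (⊤ : EReal))
    {X : Mat2} (hX : X ∈ I) (hX0 : X ≠ mat0) :
    ∃ p q : EReal, p ≤ q ∧ PC X = Set.Icc p q ∧
      (p = q ∨ ∃ p' q' : ℝ, p = (p' : EReal) ∧ q = (q' : EReal) ∧ p' < q') := by
  obtain ⟨p, q, hpq, hPC⟩ := PC_shape hX0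
  refine ⟨p, q, hpq, hPC, ?_⟩
  rcases endpoint_cases hpq with h | h | ⟨r, rfl, rfl⟩ | ⟨r, rfl, rfl⟩ | ⟨rfl, rfl⟩
  · exact Or.inl h
  · exact Or.inr h
  · exact absurd ⟨X, hX, r, Or.inl hPC⟩ hray
  · exact absurd ⟨X, hX, r, Or.inr hPC⟩ hray
  · exact absurd ⟨X, hX, hPC⟩ hfull


/-- every ideal `I` of `M₂(ℝ̄)` is determined by a member `I'` of `𝕊`:
a matrix lies in `I` iff its projective column space embeds isometrically into `I'`;
moreover `I'` is unique up to isometry. -/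
theorem ideal_determined_by_convex_set (I : Set Mat2) (hI : IsIdeal I) :
    ∃ I' ∈ SS, (∀ X : Mat2, X ∈ I ↔ IsomEmbed (PC X) I') ∧
      ∀ I'' ∈ SS, (∀ X : Mat2, X ∈ I ↔ IsomEmbed (PC X) I'') → Isom I' I'' := by
  classical
  suffices main : ∃ I' ∈ SS, ∀ X : Mat2, X ∈ I ↔ IsomEmbed (PC X) I' by
    obtain ⟨I', hSS, hiff⟩ := main
    refine ⟨I', hSS, hiff, fun I'' hSS'' hiff'' => ?_⟩
    refine SS_unique hSS hSS'' fun p q hpq => ?_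
    obtain ⟨X, hX⟩ := exists_mat_PC hpq
    rw [← hX]
    exact (hiff X).symm.trans (hiff'' X)
  by_cases hfull : ∃ A ∈ I, PC A = Set.Icc (⊥ : EReal) ⊤
  · obtain ⟨A, hA, hPCA⟩ := hfull
    refine ⟨Set.Icc ⊥ ⊤, Or.inl (Or.inr ⟨⊥, ⊤, bot_le, rfl⟩),
      fun X => ⟨fun _ => isomEmbed_into_univ _, fun _ => ?_⟩⟩
    by_cases hX0 : X = mat0
    · rw [hX0]; exact mat0_mem hI
    · obtain ⟨p, q, hpq, hPC⟩ := PC_shape hX0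
      exact mem_of_translate hI hA hPC hPCA 0 bot_le le_top
  by_cases hray : ∃ A ∈ I, ∃ r : ℝ, PC A = Set.Icc (⊥ : EReal) (r : EReal) ∨
      PC A = Set.Icc (r : EReal) (⊤ : EReal)
  · obtain ⟨A, hA, r, hPCA⟩ := hray
    have hA0 : A ≠ mat0 := by
      intro h
      rcases hPCA with h' | h' <;> rw [h, PC_mat0] at h'
      · exact (Set.nonempty_Icc.2 bot_le).ne_empty h'.symm
      · exact (Set.nonempty_Icc.2 le_top).ne_empty h'.symm
    refine ⟨Set.Icc ⊥ ((0:ℝ) : EReal),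
      Or.inl (Or.inr ⟨⊥, ((0:ℝ) : EReal), bot_le, rfl⟩), fun X => ⟨?_, ?_⟩⟩
    · intro hXI
      by_cases hX0 : X = mat0
      · rw [hX0, PC_mat0]; exact isomEmbed_empty _
      · obtain ⟨p, q, hpq, hPC⟩ := PC_shape hX0
        rw [hPC]
        refine (emb_iff_ray_lo hpq 0).2 ?_
        rintro ⟨rfl, rfl⟩
        exact hfull ⟨X, hXI, hPC⟩
    · intro hemb
      by_cases hX0 : X = mat0
      · rw [hX0]; exact mat0_mem hI
      obtain ⟨p, q, hpq, hPC⟩ := PC_shape hX0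
      rw [hPC] at hemb
      have hnf := (emb_iff_ray_lo hpq 0).1 hemb
      rcases endpoint_cases hpq with heq | ⟨p', q', rfl, rfl, hlt⟩ | ⟨q', rfl, rfl⟩ |
        ⟨p', rfl, rfl⟩ | ⟨rfl, rfl⟩
      · exact mem_of_PC_pt hI hA hA0 (p := q) (by rw [hPC, heq])
      · rcases hPCA with h' | h'
        · exact mem_of_translate hI hA hPC h' (r - q') bot_le
            (by rw [ecoe_add]; exact EReal.coe_le_coe_iff.2 (by linarith))
        · exact mem_of_translate hI hA hPC h' (r - p')
            (by rw [ecoe_add]; exact EReal.coe_le_coe_iff.2 (by linarith)) le_top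
      · rcases hPCA with h' | h'
        · exact mem_of_translate hI hA hPC h' (r - q') bot_le
            (by rw [ecoe_add]; exact EReal.coe_le_coe_iff.2 (by linarith))
        · exact mem_of_reflect hI hA hPC h' (r + q')
            (by rw [show -((q' : ℝ) : EReal) = ((-q' : ℝ) : EReal) by norm_cast, ecoe_add]
                exact EReal.coe_le_coe_iff.2 (by linarith)) le_top
      · rcases hPCA with h' | h'
        · exact mem_of_reflect hI hA hPC h' (r + p') bot_le
            (by rw [show -((p' : ℝ) : EReal) = ((-p' : ℝ) : EReal) by norm_cast, ecoe_add]
                exact EReal.coe_le_coe_iff.2 (by linarith))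
        · exact mem_of_translate hI hA hPC h' (r - p')
            (by rw [ecoe_add]; exact EReal.coe_le_coe_iff.2 (by linarith)) le_top
      · exact absurd ⟨rfl, rfl⟩ hnf
  -- no full, no ray members
  set L := ⨆ X ∈ I, dPC X with hLdef
  have hLle : ∀ X ∈ I, dPC X ≤ L := fun X hX => le_biSup _ hX
  have hLlt : ∀ c : ℝ≥0∞, c < L → ∃ X ∈ I, c < dPC X := by
    intro c hc
    rw [hLdef, lt_iSup_iff] at hc
    obtain ⟨X, hX2⟩ := hc
    rw [lt_iSup_iff] at hX2
    obtain ⟨hXI, h⟩ := hX2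
    exact ⟨X, hXI, h⟩
  rcases eq_or_ne L 0 with hL0 | hL0
  · by_cases hall : ∀ X ∈ I, X = mat0
    · refine ⟨∅, Or.inl (Or.inl rfl), fun X => ⟨?_, ?_⟩⟩
      · intro hXI
        rw [hall X hXI, PC_mat0]; exact isomEmbed_empty _
      · intro hemb
        by_cases hX0 : X = mat0
        · rw [hX0]; exact mat0_mem hI
        · obtain ⟨p, q, hpq, hPC⟩ := PC_shape hX0
          rw [hPC] at hemb
          exact absurd hemb (not_embed_nonempty_empty hpq)
    · push_neg at hall
      obtain ⟨A, hA, hA0⟩ := hall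
      refine ⟨{((0:ℝ) : EReal)},
        Or.inl (Or.inr ⟨((0:ℝ) : EReal), ((0:ℝ) : EReal), le_rfl, (Set.Icc_self _).symm⟩),
        fun X => ⟨?_, ?_⟩⟩
      · intro hXI
        by_cases hX0 : X = mat0
        · rw [hX0, PC_mat0]; exact isomEmbed_empty _
        · obtain ⟨p, q, hpq, hPC, hsh⟩ := shape_in_ideal hfull hray hXI hX0
          rcases hsh with heq | ⟨p', q', rfl, rfl, hlt⟩
          · rw [hPC, heq]
            exact isomEmbed_singleton q ⟨_, rfl⟩
          · exfalso
            have hd := dPC_Icc_coe hlt.le hPC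
            have hle := hLle X hXI
            rw [hd, hL0, le_zero_iff, ENNReal.ofReal_eq_zero] at hle
            linarith
      · intro hemb
        by_cases hX0 : X = mat0
        · rw [hX0]; exact mat0_mem hI
        · obtain ⟨p, q, hpq, hPC⟩ := PC_shape hX0
          rw [hPC] at hemb
          have heq := (emb_iff_singleton hpq _).1 hemb
          exact mem_of_PC_pt hI hA hA0 (p := q) (by rw [hPC, heq])
  rcases eq_or_ne L ⊤ with hLtop | hLtop
  · -- line case
    have hLpos : (0 : ℝ≥0∞) < L := by rw [hLtop]; exact ENNReal.zero_lt_top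
    refine ⟨Set.Ioo ⊥ ⊤, Or.inr (Or.inr rfl), fun X => ⟨?_, ?_⟩⟩
    · intro hXI
      by_cases hX0 : X = mat0
      · rw [hX0, PC_mat0]; exact isomEmbed_empty _
      · obtain ⟨p, q, hpq, hPC, hsh⟩ := shape_in_ideal hfull hray hXI hX0
        rw [hPC]
        rcases hsh with heq | ⟨p', q', rfl, rfl, hlt⟩
        · rw [heq]
          exact isomEmbed_singleton q ⟨((0:ℝ) : EReal), EReal.bot_lt_coe 0, EReal.coe_lt_top 0⟩
        · exact (emb_iff_line hpq).2 (Or.inr ⟨p', q', rfl, rfl⟩)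
    · intro hemb
      by_cases hX0 : X = mat0
      · rw [hX0]; exact mat0_mem hI
      obtain ⟨p, q, hpq, hPC⟩ := PC_shape hX0
      rw [hPC] at hemb
      rcases (emb_iff_line hpq).1 hemb with heq | ⟨p', q', rfl, rfl⟩
      · obtain ⟨A, hA, hdA⟩ := hLlt 0 hLpos
        have hA0 : A ≠ mat0 := by
          intro h; rw [h, dPC_mat0] at hdA; exact lt_irrefl _ hdA
        exact mem_of_PC_pt hI hA hA0 (p := q) (by rw [hPC, heq])
      · obtain ⟨A, hA, hdA⟩ := hLlt (ENNReal.ofReal (q' - p'))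
          (by rw [hLtop]; exact ENNReal.ofReal_lt_top)
        have hA0 : A ≠ mat0 := by
          intro h; rw [h, dPC_mat0] at hdA
          exact (zero_le).not_gt hdA
        obtain ⟨u, v, huv, hPCA, hshA⟩ := shape_in_ideal hfull hray hA hA0
        rcases hshA with heqA | ⟨u', v', rfl, rfl, hltA⟩
        · rw [dPC_pt (by rw [hPCA, heqA])] at hdA
          exact absurd hdA (zero_le).not_gt
        · rw [dPC_Icc_coe hltA.le hPCA] at hdA
          have hlen : q' - p' < v' - u' := by
            by_contra hcon
            push_neg at hcon
            exact (ENNReal.ofReal_le_ofReal hcon).not_gt hdA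
          have hplt : p' ≤ q' := by
            have := hpq; exact_mod_cast this
          exact mem_of_translate hI hA hPC hPCA (u' - p')
            (by rw [ecoe_add]; exact EReal.coe_le_coe_iff.2 (by linarith))
            (by rw [ecoe_add]; exact EReal.coe_le_coe_iff.2 (by linarith))
  -- finite positive supremum
  have hl0 : 0 < L.toReal := ENNReal.toReal_pos hL0 hLtop
  have hLeq : ENNReal.ofReal L.toReal = L := ENNReal.ofReal_toReal hLtop
  by_cases hatt : ∃ A ∈ I, dPC A = L
  · obtain ⟨A, hA, hdA⟩ := hatt
    have hA0 : A ≠ mat0 := by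
      intro h; rw [h, dPC_mat0] at hdA; exact hL0 hdA.symm
    obtain ⟨u, v, huv, hPCA, hshA⟩ := shape_in_ideal hfull hray hA hA0
    rcases hshA with heqA | ⟨u', v', rfl, rfl, hltA⟩
    · exact absurd (dPC_pt (by rw [hPCA, heqA]) ▸ hdA).symm hL0
    have hlv : v' - u' = L.toReal := by
      have hd := dPC_Icc_coe hltA.le hPCA
      rw [hdA, ← hLeq] at hd
      exact (ENNReal.ofReal_eq_ofReal_iff (by linarith) (le_of_lt hl0)).1 hd.symm
    refine ⟨Set.Icc ((0:ℝ) : EReal) ((L.toReal : ℝ) : EReal),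
      Or.inl (Or.inr ⟨_, _, EReal.coe_le_coe_iff.2 hl0.le, rfl⟩), fun X => ⟨?_, ?_⟩⟩
    · intro hXI
      by_cases hX0 : X = mat0
      · rw [hX0, PC_mat0]; exact isomEmbed_empty _
      · obtain ⟨p, q, hpq, hPC, hsh⟩ := shape_in_ideal hfull hray hXI hX0
        rw [hPC]
        rcases hsh with heq | ⟨p', q', rfl, rfl, hlt⟩
        · rw [heq]
          exact isomEmbed_singleton q ⟨((0:ℝ) : EReal), le_rfl, EReal.coe_le_coe_iff.2 hl0.le⟩
        · refine (emb_iff_Icc hpq hl0).2 (Or.inr ⟨p', q', rfl, rfl, ?_⟩)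
          have hle := hLle X hXI
          rw [dPC_Icc_coe hlt.le hPC, ← hLeq] at hle
          have := (ENNReal.ofReal_le_ofReal_iff hl0.le).1 hle
          linarith
    · intro hemb
      by_cases hX0 : X = mat0
      · rw [hX0]; exact mat0_mem hI
      obtain ⟨p, q, hpq, hPC⟩ := PC_shape hX0
      rw [hPC] at hemb
      rcases (emb_iff_Icc hpq hl0).1 hemb with heq | ⟨p', q', rfl, rfl, hle⟩
      · exact mem_of_PC_pt hI hA hA0 (p := q) (by rw [hPC, heq])
      · exact mem_of_translate hI hA hPC hPCA (u' - p')
          (by rw [ecoe_add]; exact EReal.coe_le_coe_iff.2 (by linarith))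
          (by rw [ecoe_add]; exact EReal.coe_le_coe_iff.2 (by linarith))
  · -- not attained
    refine ⟨Set.Ioo ((0:ℝ) : EReal) ((L.toReal : ℝ) : EReal),
      Or.inr (Or.inl ⟨0, L.toReal, hl0, rfl⟩), fun X => ⟨?_, ?_⟩⟩
    · intro hXI
      by_cases hX0 : X = mat0
      · rw [hX0, PC_mat0]; exact isomEmbed_empty _
      · obtain ⟨p, q, hpq, hPC, hsh⟩ := shape_in_ideal hfull hray hXI hX0
        rw [hPC]
        rcases hsh with heq | ⟨p', q', rfl, rfl, hlt⟩
        · rw [heq]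
          refine isomEmbed_singleton q ⟨((L.toReal/2 : ℝ) : EReal), ?_, ?_⟩
          · exact EReal.coe_lt_coe_iff.2 (by linarith)
          · exact EReal.coe_lt_coe_iff.2 (by linarith)
        · refine (emb_iff_Ioo hpq hl0).2 (Or.inr ⟨p', q', rfl, rfl, ?_⟩)
          have hle := lt_of_le_of_ne (hLle X hXI) (fun h => hatt ⟨X, hXI, h⟩)
          rw [dPC_Icc_coe hlt.le hPC, ← hLeq] at hle
          have := (ENNReal.ofReal_lt_ofReal_iff_of_nonneg (by linarith)).1 hle
          linarith
    · intro hemb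
      by_cases hX0 : X = mat0
      · rw [hX0]; exact mat0_mem hI
      obtain ⟨p, q, hpq, hPC⟩ := PC_shape hX0
      rw [hPC] at hemb
      rcases (emb_iff_Ioo hpq hl0).1 hemb with heq | ⟨p', q', rfl, rfl, hle⟩
      · obtain ⟨A, hA, hdA⟩ := hLlt 0 (pos_iff_ne_zero.2 hL0)
        have hA0 : A ≠ mat0 := by
          intro h; rw [h, dPC_mat0] at hdA; exact lt_irrefl _ hdA
        exact mem_of_PC_pt hI hA hA0 (p := q) (by rw [hPC, heq])
      · obtain ⟨A, hA, hdA⟩ := hLlt (ENNReal.ofReal (q' - p'))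
          (by rw [← hLeq]
              exact (ENNReal.ofReal_lt_ofReal_iff hl0).2 (by linarith))
        have hA0 : A ≠ mat0 := by
          intro h; rw [h, dPC_mat0] at hdA
          exact (zero_le).not_gt hdA
        obtain ⟨u, v, huv, hPCA, hshA⟩ := shape_in_ideal hfull hray hA hA0
        rcases hshA with heqA | ⟨u', v', rfl, rfl, hltA⟩
        · rw [dPC_pt (by rw [hPCA, heqA])] at hdA
          exact absurd hdA (zero_le).not_gt
        · rw [dPC_Icc_coe hltA.le hPCA] at hdA
          have hlen : q' - p' < v' - u' := by
            by_contra hcon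
            push_neg at hcon
            exact (ENNReal.ofReal_le_ofReal hcon).not_gt hdA
          have hplt : p' ≤ q' := by exact_mod_cast hpq
          exact mem_of_translate hI hA hPC hPCA (u' - p')
            (by rw [ecoe_add]; exact EReal.coe_le_coe_iff.2 (by linarith))
            (by rw [ecoe_add]; exact EReal.coe_le_coe_iff.2 (by linarith))
end
end

section
/- Every ideal I of M₂(ℝ̄) is either principal, or equal to the set difference of a principal ideal and the 𝓙-class of a generator of that principal ideal: i.e. there exists A ∈ M₂(ℝ̄) such that I = {X ⊗ A ⊗ Y : X, Y ∈ M₂(ℝ̄)} \ {B ∈ M₂(ℝ̄) : B 𝓙 A}. -/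
open scoped Classical ENNReal

/-- `A ≤_J B` iff `A = X ⊗ B ⊗ Y` for some `X, Y`. -/
noncomputable def leJ (A B : Mat2) : Prop := ∃ X Y, A = tMul (tMul X B) Y

/-- Green's relation `𝓙`. -/
noncomputable def relJ (A B : Mat2) : Prop := leJ A B ∧ leJ B A

/-- The principal (two-sided) ideal generated by `A`. -/
noncomputable def pIdeal (A : Mat2) : Set Mat2 := {Z | ∃ X Y : Mat2, Z = tMul (tMul X A) Y}

namespace Trop

lemma sup2 (f : Fin 2 → Rb) : Finset.univ.sup f = f 0 ⊔ f 1 := by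
  show Finset.sup {0,1} f = _
  rw [Finset.sup_insert, Finset.sup_singleton]

lemma tmul_apply (A B : Mat2) (i j : Fin 2) :
    tMul A B i j = (A i 0 + B 0 j) ⊔ (A i 1 + B 1 j) := by
  show Finset.univ.sup _ = _
  rw [sup2]

lemma addsup (a b c : Rb) : a + (b ⊔ c) = (a+b) ⊔ (a+c) := (max_add_add_left a b c).symm
lemma supadd (a b c : Rb) : (a ⊔ b) + c = (a+c) ⊔ (b+c) := (max_add_add_right a b c).symm

lemma tmul_assoc (A B C : Mat2) : tMul (tMul A B) C = tMul A (tMul B C) := by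
  funext i j
  simp only [tmul_apply, addsup, supadd, add_assoc]
  exact sup_sup_sup_comm _ _ _ _

def Zm : Mat2 := fun _ _ => ⊥
noncomputable def Em : Mat2 := fun _ _ => ((0:ℝ) : Rb)
noncomputable def Nm (ℓ : ℝ) : Mat2 := fun i j => if i = 1 ∧ j = 1 then ((ℓ:ℝ) : Rb) else ((0:ℝ):Rb)
noncomputable def Ninf : Mat2 := fun i j => if i = 1 ∧ j = 0 then ⊥ else ((0:ℝ):Rb)
noncomputable def Idm : Mat2 := fun i j => if i = j then ((0:ℝ):Rb) else ⊥
noncomputable def Sw : Mat2 := fun i j => if i = j then ⊥ else ((0:ℝ):Rb)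
noncomputable def Dml (α β : Rb) : Mat2 := fun i j => if i = j then (if i = 0 then α else β) else ⊥

noncomputable def Dg (A : Mat2) : Rb := A 0 0 + A 1 1
noncomputable def Pm (A : Mat2) : Rb := A 0 1 + A 1 0

noncomputable def cls (A : Mat2) : ℕ :=
  if A = Zm then 0
  else if Dg A = Pm A then 1
  else if ∀ i j, A i j ≠ ⊥ then 2
  else if (A 0 0 = ⊥ ∧ A 1 1 = ⊥) ∨ (A 0 1 = ⊥ ∧ A 1 0 = ⊥) then 4
  else 3

noncomputable def lenR (A : Mat2) : ℝ := |WithBot.unbotD 0 (Dg A) - WithBot.unbotD 0 (Pm A)|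
noncomputable def lenE (A : Mat2) : ℝ≥0∞ := ENNReal.ofReal (lenR A)

lemma eq_zm_iff (A : Mat2) : A = Zm ↔ ∀ i j, A i j = ⊥ := by
  constructor
  · intro h i j; rw [h]; rfl
  · intro h; funext i j; exact h i j

lemma tmul_zm_left (A : Mat2) : tMul Zm A = Zm := by
  funext i j; simp [tmul_apply, Zm]

lemma tmul_zm_right (A : Mat2) : tMul A Zm = Zm := by
  funext i j; simp [tmul_apply, Zm]

lemma tmul_idm_left (A : Mat2) : tMul Idm A = A := by
  funext i j; fin_cases i <;> simp [tmul_apply, Idm]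

lemma tmul_idm_right (A : Mat2) : tMul A Idm = A := by
  funext i j; fin_cases j <;> simp [tmul_apply, Idm]

lemma dml_left (α β : Rb) (A : Mat2) :
    tMul (Dml α β) A = fun i j => (if i = 0 then α else β) + A i j := by
  funext i j; fin_cases i <;> simp [tmul_apply, Dml]

lemma dml_right (γ δ : Rb) (A : Mat2) :
    tMul A (Dml γ δ) = fun i j => A i j + (if j = 0 then γ else δ) := by
  funext i j; fin_cases j <;> simp [tmul_apply, Dml]

lemma sw_left (A : Mat2) : tMul Sw A = fun i j => A (i+1) j := by
  funext i j; fin_cases i <;> simp [tmul_apply, Sw] <;> rfl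

lemma sw_right (A : Mat2) : tMul A Sw = fun i j => A i (j+1) := by
  funext i j; fin_cases j <;> simp [tmul_apply, Sw] <;> rfl


lemma mem_pIdeal_iff {B A : Mat2} : B ∈ pIdeal A ↔ ∃ X Y, B = tMul (tMul X A) Y := Iff.rfl

lemma self_mem_pIdeal (A : Mat2) : A ∈ pIdeal A :=
  ⟨Idm, Idm, by rw [tmul_idm_left, tmul_idm_right]⟩

lemma pIdeal_trans {B C A : Mat2} (h1 : B ∈ pIdeal C) (h2 : C ∈ pIdeal A) : B ∈ pIdeal A := by
  obtain ⟨X, Y, rfl⟩ := h1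
  obtain ⟨X', Y', rfl⟩ := h2
  exact ⟨tMul X X', tMul Y' Y, by simp only [tmul_assoc]⟩

lemma bot_mem_pIdeal (A : Mat2) : Zm ∈ pIdeal A :=
  ⟨Zm, Zm, by rw [tmul_zm_left, tmul_zm_right]⟩

lemma mem_pIdeal_idm (B : Mat2) : B ∈ pIdeal Idm :=
  ⟨B, Idm, by rw [tmul_idm_right, tmul_idm_right]⟩

lemma sw_sw (A : Mat2) : tMul Sw (tMul Sw A) = A := by
  rw [sw_left, sw_left]; funext i j; fin_cases i <;> rfl

lemma sw_sw' (A : Mat2) : tMul (tMul A Sw) Sw = A := by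
  rw [sw_right, sw_right]; funext i j; fin_cases j <;> rfl

lemma relJ_sw_left (A : Mat2) : relJ (tMul Sw A) A := by
  constructor
  · exact ⟨Sw, Idm, by rw [tmul_idm_right]⟩
  · exact ⟨Sw, Idm, by rw [tmul_idm_right, sw_sw]⟩

lemma relJ_sw_right (A : Mat2) : relJ (tMul A Sw) A := by
  constructor
  · exact ⟨Idm, Sw, by rw [tmul_idm_left]⟩
  · exact ⟨Idm, Sw, by rw [tmul_idm_left, sw_sw']⟩

lemma relJ_trans {A B C : Mat2} (h1 : relJ A B) (h2 : relJ B C) : relJ A C :=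
  ⟨pIdeal_trans h1.1 h2.1, pIdeal_trans h2.2 h1.2⟩

lemma relJ_symm {A B : Mat2} (h : relJ A B) : relJ B A := ⟨h.2, h.1⟩

/-- Key identity: if `a + d = b + c` then the `D`/`P` entries of a product agree. -/
lemma keyDP (x y z w a b c d : Rb) (h : a + d = b + c) :
    ((x+a)⊔(y+c)) + ((z+b)⊔(w+d)) = ((x+b)⊔(y+d)) + ((z+a)⊔(w+c)) := by
  rw [supadd, addsup, addsup, supadd, addsup, addsup]
  congr 1
  · congr 1
    · abel
    · calc x+a+(w+d) = x+w+(a+d) := by abel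
        _ = x+w+(b+c) := by rw [h]
        _ = x+b+(w+c) := by abel
  · congr 1
    · calc y+c+(z+b) = y+z+(b+c) := by abel
        _ = y+z+(a+d) := by rw [h]
        _ = y+d+(z+a) := by abel
    · abel

lemma le_add_coe (t : Rb) {k : ℝ} (hk : 0 ≤ k) : t ≤ t + ↑k :=
  le_add_of_nonneg_right (by exact_mod_cast hk)

/-- Key inequality for lengths. -/
lemma keyLen (x y z w : Rb) (a b c d k : ℝ) (h1 : a + d ≤ b + c + k) (h2 : b + c ≤ a + d + k)
    (hk : 0 ≤ k) :
    ((x+↑a)⊔(y+↑c)) + ((z+↑b)⊔(w+↑d)) ≤ ((x+↑b)⊔(y+↑d)) + ((z+↑a)⊔(w+↑c)) + ↑k := by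
  set R : Rb := ((x+↑b)⊔(y+↑d)) + ((z+↑a)⊔(w+↑c)) with hR
  rw [supadd, addsup, addsup]
  have hr : R = ((x+↑b+(z+↑a)) ⊔ (x+↑b+(w+↑c))) ⊔ ((y+↑d+(z+↑a)) ⊔ (y+↑d+(w+↑c))) := by
    rw [hR, supadd, addsup, addsup]
  refine sup_le (sup_le ?_ ?_) (sup_le ?_ ?_)
  · have e : x+↑a+(z+↑b) = x+↑b+(z+↑a) := by abel
    rw [e]
    exact le_trans (by rw [hr]; exact le_sup_of_le_left le_sup_left) (le_add_coe R hk)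
  · have e : x+↑a+(w+↑d) = x+w+(↑(a+d) : Rb) := by push_cast; abel
    have e2 : x+↑b+(w+↑c)+↑k = x+w+(↑(b+c+k) : Rb) := by push_cast; abel
    calc x+↑a+(w+↑d) = x+w+(↑(a+d) : Rb) := e
      _ ≤ x+w+(↑(b+c+k) : Rb) := by
          exact add_le_add_right (by exact_mod_cast h1) _
      _ = x+↑b+(w+↑c)+↑k := e2.symm
      _ ≤ R + ↑k := by
          refine add_le_add_left ?_ _
          rw [hr]; exact le_sup_of_le_left le_sup_right
  · have e : y+↑c+(z+↑b) = y+z+(↑(b+c) : Rb) := by push_cast; abel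
    have e2 : y+↑d+(z+↑a)+↑k = y+z+(↑(a+d+k) : Rb) := by push_cast; abel
    calc y+↑c+(z+↑b) = y+z+(↑(b+c) : Rb) := e
      _ ≤ y+z+(↑(a+d+k) : Rb) := add_le_add_right (by exact_mod_cast h2) _
      _ = y+↑d+(z+↑a)+↑k := e2.symm
      _ ≤ R + ↑k := by
          refine add_le_add_left ?_ _
          rw [hr]; exact le_sup_of_le_right le_sup_left
  · have e : y+↑c+(w+↑d) = y+↑d+(w+↑c) := by abel
    rw [e]
    exact le_trans (by rw [hr]; exact le_sup_of_le_right le_sup_right) (le_add_coe R hk)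

lemma Dg_tmul (X A : Mat2) :
    Dg (tMul X A) = ((X 0 0 + A 0 0)⊔(X 0 1 + A 1 0)) + ((X 1 0 + A 0 1)⊔(X 1 1 + A 1 1)) := by
  simp [Dg, tmul_apply]

lemma Pm_tmul (X A : Mat2) :
    Pm (tMul X A) = ((X 0 0 + A 0 1)⊔(X 0 1 + A 1 1)) + ((X 1 0 + A 0 0)⊔(X 1 1 + A 1 0)) := by
  simp [Pm, tmul_apply]

lemma row_bot (X A : Mat2) (i : Fin 2) (h0 : X i 0 = ⊥) (h1 : X i 1 = ⊥) (j : Fin 2) :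
    tMul X A i j = ⊥ := by
  simp [tmul_apply, h0, h1]

lemma DgPm_of_row_bot (M : Mat2) (i : Fin 2) (h : ∀ j, M i j = ⊥) :
    Dg M = ⊥ ∧ Pm M = ⊥ := by
  have h0 := h 0; have h1 := h 1
  fin_cases i <;> simp_all [Dg, Pm]

lemma DgPm_of_col_bot (M : Mat2) (j : Fin 2) (h : ∀ i, M i j = ⊥) :
    Dg M = ⊥ ∧ Pm M = ⊥ := by
  have h0 := h 0; have h1 := h 1
  fin_cases j <;> simp_all [Dg, Pm]

lemma entry_bot_iff (X A : Mat2) (i j : Fin 2) :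
    tMul X A i j = ⊥ ↔ (X i 0 = ⊥ ∨ A 0 j = ⊥) ∧ (X i 1 = ⊥ ∨ A 1 j = ⊥) := by
  simp [tmul_apply, WithBot.add_eq_bot]

lemma cls_zm : cls Zm = 0 := by simp [cls]

lemma cls_le_four (A : Mat2) : cls A ≤ 4 := by
  unfold cls; split_ifs <;> omega

lemma cls_eq_zero_iff (A : Mat2) : cls A = 0 ↔ A = Zm := by
  unfold cls; split_ifs with h <;> simp [h]

lemma dg_pm_zm : Dg Zm = Pm Zm := by simp [Dg, Pm, Zm]

lemma cls_le_one_iff (A : Mat2) : cls A ≤ 1 ↔ A = Zm ∨ Dg A = Pm A := by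
  unfold cls; split_ifs with h1 h2 h3 h4 <;> simp_all <;> omega

lemma cls_eq_one (A : Mat2) (h0 : A ≠ Zm) (h1 : Dg A = Pm A) : cls A = 1 := by
  simp [cls, h0, h1]

lemma cls_eq_two_iff (A : Mat2) : cls A = 2 ↔ Dg A ≠ Pm A ∧ ∀ i j, A i j ≠ ⊥ := by
  unfold cls
  split_ifs with h1 h2 h3 h4 <;>
    simp_all [dg_pm_zm] <;> omega

lemma cls_eq_four_iff (A : Mat2) :
    cls A = 4 ↔ Dg A ≠ Pm A ∧ ((A 0 0 = ⊥ ∧ A 1 1 = ⊥) ∨ (A 0 1 = ⊥ ∧ A 1 0 = ⊥)) := by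
  unfold cls
  split_ifs with h1 h2 h3 h4 <;> simp_all [dg_pm_zm]

lemma cls_eq_three_iff (A : Mat2) :
    cls A = 3 ↔ Dg A ≠ Pm A ∧ (¬ ∀ i j, A i j ≠ ⊥) ∧
      ¬((A 0 0 = ⊥ ∧ A 1 1 = ⊥) ∨ (A 0 1 = ⊥ ∧ A 1 0 = ⊥)) := by
  unfold cls
  split_ifs with h1 h2 h3 h4 <;> simp_all [dg_pm_zm]

lemma mono_left (X A : Mat2) :
    cls (tMul X A) ≤ cls A ∧
      (cls A = 2 → cls (tMul X A) = 2 → lenR (tMul X A) ≤ lenR A) := by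
  set M := tMul X A with hM
  by_cases h0 : A = Zm
  · constructor
    · have : M = Zm := by rw [hM, h0, tmul_zm_right]
      simp [this, cls_zm]
    · intro hA2; rw [h0, cls_zm] at hA2; omega
  by_cases h1 : Dg A = Pm A
  · have hA1 : cls A = 1 := cls_eq_one A h0 h1
    constructor
    · rw [hA1, cls_le_one_iff]
      by_cases hMz : M = Zm
      · exact Or.inl hMz
      · refine Or.inr ?_
        rw [hM, Dg_tmul, Pm_tmul]
        exact keyDP _ _ _ _ _ _ _ _ h1
    · intro hA2; omega
  by_cases h2 : ∀ i j, A i j ≠ ⊥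
  · have hA2 : cls A = 2 := (cls_eq_two_iff A).mpr ⟨h1, h2⟩
    have tri : M = Zm ∨ Dg M = Pm M ∨ ∀ i j, M i j ≠ ⊥ := by
      by_cases hMf : ∀ i j, M i j ≠ ⊥
      · exact Or.inr (Or.inr hMf)
      · push_neg at hMf
        obtain ⟨i, j, hij⟩ := hMf
        have hX : X i 0 = ⊥ ∧ X i 1 = ⊥ := by
          have := (entry_bot_iff X A i j).mp hij
          exact ⟨this.1.resolve_right (h2 0 j), this.2.resolve_right (h2 1 j)⟩
        have hrow : ∀ j', M i j' = ⊥ := row_bot X A i hX.1 hX.2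
        have := DgPm_of_row_bot M i hrow
        exact Or.inr (Or.inl (this.1.trans this.2.symm))
    constructor
    · rw [hA2]
      rcases tri with h | h | h
      · simp [h, cls_zm]
      · have := (cls_le_one_iff M).mpr (Or.inr h); omega
      · unfold cls; split_ifs <;> omega
    · intro _ hM2
      obtain ⟨hMdp, hMf⟩ := (cls_eq_two_iff M).mp hM2
      obtain ⟨a, ha⟩ := WithBot.ne_bot_iff_exists.mp (h2 0 0)
      obtain ⟨b, hb⟩ := WithBot.ne_bot_iff_exists.mp (h2 0 1)
      obtain ⟨c, hc⟩ := WithBot.ne_bot_iff_exists.mp (h2 1 0)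
      obtain ⟨d, hd⟩ := WithBot.ne_bot_iff_exists.mp (h2 1 1)
      set k : ℝ := lenR A with hk
      have hDgA : Dg A = ((a + d : ℝ) : Rb) := by
        rw [Dg, ← ha, ← hd]; push_cast; ring
      have hPmA : Pm A = ((b + c : ℝ) : Rb) := by
        rw [Pm, ← hb, ← hc]; push_cast; ring
      have hkval : k = |(a + d) - (b + c)| := by
        rw [hk, lenR, hDgA, hPmA]
        norm_cast
      have hk0 : 0 ≤ k := by rw [hkval]; exact abs_nonneg _
      have hik1 : a + d ≤ b + c + k := by
        have := le_abs_self ((a+d) - (b+c)); rw [← hkval] at this; linarith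
      have hik2 : b + c ≤ a + d + k := by
        have := neg_abs_le ((a+d) - (b+c)); rw [← hkval] at this; linarith
      have key1 : Dg M ≤ Pm M + ↑k := by
        rw [hM, Dg_tmul, Pm_tmul, ← ha, ← hb, ← hc, ← hd]
        exact keyLen _ _ _ _ a b c d k hik1 hik2 hk0
      have key2 : Pm M ≤ Dg M + ↑k := by
        rw [hM, Dg_tmul, Pm_tmul, ← ha, ← hb, ← hc, ← hd]
        exact keyLen _ _ _ _ b a d c k hik2 hik1 hk0
      have hDgM : Dg M ≠ ⊥ := by
        rw [Dg]; simp [WithBot.add_eq_bot, hMf 0 0, hMf 1 1]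
      have hPmM : Pm M ≠ ⊥ := by
        rw [Pm]; simp [WithBot.add_eq_bot, hMf 0 1, hMf 1 0]
      obtain ⟨dm, hdm⟩ := WithBot.ne_bot_iff_exists.mp hDgM
      obtain ⟨pm, hpm⟩ := WithBot.ne_bot_iff_exists.mp hPmM
      have k1' : dm ≤ pm + k := by
        rw [← hdm, ← hpm] at key1
        exact_mod_cast key1
      have k2' : pm ≤ dm + k := by
        rw [← hdm, ← hpm] at key2
        exact_mod_cast key2
      have : lenR M = |dm - pm| := by rw [lenR, ← hdm, ← hpm]; simp
      rw [this, abs_sub_le_iff]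
      constructor <;> linarith
  by_cases h4 : (A 0 0 = ⊥ ∧ A 1 1 = ⊥) ∨ (A 0 1 = ⊥ ∧ A 1 0 = ⊥)
  · have hA4 : cls A = 4 := (cls_eq_four_iff A).mpr ⟨h1, h4⟩
    exact ⟨hA4 ▸ cls_le_four M, fun hA2 => by omega⟩
  · have hA3 : cls A = 3 := by
      rw [cls_eq_three_iff]; exact ⟨h1, by push_neg; push_neg at h2; exact h2, h4⟩
    refine ⟨?_, fun hA2 => by omega⟩
    rw [hA3]
    unfold cls
    split_ifs with g1 g2 g3 g4
    any_goals omega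
    -- in branch `g4` the value is 4; derive a contradiction
    exfalso
    have hMdp : Dg M ≠ Pm M := g2
    have hrow : ∀ (i : Fin 2), ¬(M i 0 = ⊥ ∧ M i 1 = ⊥) := by
      intro i hrc
      have hall : ∀ j, M i j = ⊥ := by
        intro j; fin_cases j; exacts [hrc.1, hrc.2]
      have := DgPm_of_row_bot M i hall
      exact hMdp (this.1.trans this.2.symm)
    have e00 := entry_bot_iff X A 0 0
    have e01 := entry_bot_iff X A 0 1
    have e10 := entry_bot_iff X A 1 0
    have e11 := entry_bot_iff X A 1 1
    rw [← hM] at e00 e01 e10 e11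
    rcases g4 with ⟨hm1, hm2⟩ | ⟨hm1, hm2⟩
    · have hm01 : ¬ (M 0 1 = ⊥) := fun h => hrow 0 ⟨hm1, h⟩
      have hm10 : ¬ (M 1 0 = ⊥) := fun h => hrow 1 ⟨h, hm2⟩
      rw [e00] at hm1; rw [e11] at hm2
      rw [e01] at hm01; rw [e10] at hm10
      by_cases hx00 : X 0 0 = ⊥
      · have hq : ¬(X 0 1 = ⊥ ∨ A 1 1 = ⊥) := fun hq => hm01 ⟨Or.inl hx00, hq⟩
        push_neg at hq
        have ha10 : A 1 0 = ⊥ := hm1.2.resolve_left hq.1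
        have hx11 : X 1 1 = ⊥ := hm2.2.resolve_right hq.2
        have hq2 : ¬(X 1 0 = ⊥ ∨ A 0 0 = ⊥) := fun hq2 => hm10 ⟨hq2, Or.inl hx11⟩
        push_neg at hq2
        have ha01 : A 0 1 = ⊥ := hm2.1.resolve_left hq2.1
        exact h4 (Or.inr ⟨ha01, ha10⟩)
      · have ha00 : A 0 0 = ⊥ := hm1.1.resolve_left hx00
        have hq : ¬(X 1 1 = ⊥ ∨ A 1 0 = ⊥) := fun hq => hm10 ⟨Or.inr ha00, hq⟩
        push_neg at hq
        have ha11 : A 1 1 = ⊥ := hm2.2.resolve_left hq.1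
        exact h4 (Or.inl ⟨ha00, ha11⟩)
    · have hm00 : ¬ (M 0 0 = ⊥) := fun h => hrow 0 ⟨h, hm1⟩
      have hm11 : ¬ (M 1 1 = ⊥) := fun h => hrow 1 ⟨hm2, h⟩
      rw [e01] at hm1; rw [e10] at hm2
      rw [e00] at hm00; rw [e11] at hm11
      by_cases hx00 : X 0 0 = ⊥
      · have hq : ¬(X 0 1 = ⊥ ∨ A 1 0 = ⊥) := fun hq => hm00 ⟨Or.inl hx00, hq⟩
        push_neg at hq
        have ha11 : A 1 1 = ⊥ := hm1.2.resolve_left hq.1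
        have hx11 : X 1 1 = ⊥ := hm2.2.resolve_right hq.2
        have hq2 : ¬(X 1 0 = ⊥ ∨ A 0 1 = ⊥) := fun hq2 => hm11 ⟨hq2, Or.inl hx11⟩
        push_neg at hq2
        have ha00 : A 0 0 = ⊥ := hm2.1.resolve_left hq2.1
        exact h4 (Or.inl ⟨ha00, ha11⟩)
      · have ha01 : A 0 1 = ⊥ := hm1.1.resolve_left hx00
        have hq : ¬(X 1 1 = ⊥ ∨ A 1 1 = ⊥) := fun hq => hm11 ⟨Or.inr ha01, hq⟩
        push_neg at hq
        have ha10 : A 1 0 = ⊥ := hm2.2.resolve_left hq.1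
        exact h4 (Or.inr ⟨ha01, ha10⟩)

noncomputable def Tr (A : Mat2) : Mat2 := fun i j => A j i

lemma tr_tmul (A B : Mat2) : Tr (tMul A B) = tMul (Tr B) (Tr A) := by
  funext i j
  simp only [Tr, tmul_apply]
  rw [add_comm (B 0 i) (A j 0), add_comm (B 1 i) (A j 1)]

lemma tr_zm_iff (A : Mat2) : Tr A = Zm ↔ A = Zm := by
  simp only [eq_zm_iff, Tr]
  exact forall_swap

lemma dg_tr (A : Mat2) : Dg (Tr A) = Dg A := rfl

lemma pm_tr (A : Mat2) : Pm (Tr A) = Pm A := add_comm _ _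

lemma cls_tr (A : Mat2) : cls (Tr A) = cls A := by
  have h1 : (∀ i j, Tr A i j ≠ ⊥) ↔ (∀ i j, A i j ≠ ⊥) := forall_swap
  have h2 : ((Tr A 0 0 = ⊥ ∧ Tr A 1 1 = ⊥) ∨ (Tr A 0 1 = ⊥ ∧ Tr A 1 0 = ⊥)) ↔
      ((A 0 0 = ⊥ ∧ A 1 1 = ⊥) ∨ (A 0 1 = ⊥ ∧ A 1 0 = ⊥)) := by
    simp only [Tr]; tauto
  unfold cls
  simp only [tr_zm_iff, dg_tr, pm_tr, h1, h2]

lemma lenR_tr (A : Mat2) : lenR (Tr A) = lenR A := by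
  rw [lenR, lenR, dg_tr, pm_tr]

lemma mono_right (A Y : Mat2) :
    cls (tMul A Y) ≤ cls A ∧
      (cls A = 2 → cls (tMul A Y) = 2 → lenR (tMul A Y) ≤ lenR A) := by
  have h := mono_left (Tr Y) (Tr A)
  rw [← tr_tmul, cls_tr, cls_tr, lenR_tr, lenR_tr] at h
  exact h

lemma mono {B A : Mat2} (h : B ∈ pIdeal A) :
    cls B ≤ cls A ∧ (cls A = 2 → cls B = 2 → lenE B ≤ lenE A) := by
  obtain ⟨X, Y, rfl⟩ := h
  have h1 := mono_left X A
  have h2 := mono_right (tMul X A) Y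
  constructor
  · exact le_trans h2.1 h1.1
  · intro hA2 hB2
    have hC2 : cls (tMul X A) = 2 := by
      have := h1.1; have := h2.1; omega
    have := le_trans (h2.2 hC2 hB2) (h1.2 hA2 hC2)
    exact ENNReal.ofReal_le_ofReal this

lemma diag_conj (α β γ δ : Rb) (A : Mat2) :
    tMul (tMul (Dml α β) A) (Dml γ δ) =
      fun i j => (if i = 0 then α else β) + A i j + (if j = 0 then γ else δ) := by
  rw [dml_left, dml_right]

lemma cls_em : cls Em = 1 := by
  have h1 : Em ≠ Zm := by
    intro h
    have := congrFun (congrFun h 0) 0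
    simp [Em, Zm] at this
  have h2 : Dg Em = Pm Em := rfl
  exact cls_eq_one Em h1 h2

lemma dg_nm (ℓ : ℝ) : Dg (Nm ℓ) = ((ℓ : ℝ) : Rb) := by
  simp [Dg, Nm]

lemma pm_nm (ℓ : ℝ) : Pm (Nm ℓ) = ((0 : ℝ) : Rb) := by
  simp [Pm, Nm]

lemma cls_nm {ℓ : ℝ} (h : 0 < ℓ) : cls (Nm ℓ) = 2 := by
  rw [cls_eq_two_iff]
  constructor
  · rw [dg_nm, pm_nm]
    intro hh
    have : ℓ = 0 := by exact_mod_cast hh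
    linarith
  · intro i j
    unfold Nm
    split_ifs <;> exact WithBot.coe_ne_bot

lemma lenR_nm (ℓ : ℝ) : lenR (Nm ℓ) = |ℓ| := by
  rw [lenR, dg_nm, pm_nm]
  simp

lemma cls_ninf : cls Ninf = 3 := by
  rw [cls_eq_three_iff]
  refine ⟨?_, ?_, ?_⟩
  · show Ninf 0 0 + Ninf 1 1 ≠ Ninf 0 1 + Ninf 1 0
    simp [Ninf]
  · push_neg
    exact ⟨1, 0, by simp [Ninf]⟩
  · simp [Ninf]

lemma cls_idm : cls Idm = 4 := by
  rw [cls_eq_four_iff]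
  constructor
  · show Idm 0 0 + Idm 1 1 ≠ Idm 0 1 + Idm 1 0
    simp [Idm]
  · right; simp [Idm]

lemma em_mem {A : Mat2} (hA : A ≠ Zm) : Em ∈ pIdeal A := by
  have hA' : ∃ i j, A i j ≠ ⊥ := by
    by_contra hc; push_neg at hc
    exact hA ((eq_zm_iff A).mpr hc)
  obtain ⟨i₀, j₀, h⟩ := hA'
  obtain ⟨r, hr⟩ := WithBot.ne_bot_iff_exists.mp h
  refine ⟨(fun _ k => if k = i₀ then ((-r : ℝ):Rb) else ⊥),
          (fun k _ => if k = j₀ then ((0:ℝ):Rb) else ⊥), ?_⟩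
  funext i j
  fin_cases i₀ <;> fin_cases j₀ <;>
    simp_all [tmul_apply, Em] <;>
    rw [← hr, ← WithBot.coe_add] <;> norm_num

lemma cls1_mem_em {B : Mat2} (hz : B ≠ Zm) (hdp : Dg B = Pm B) : B ∈ pIdeal Em := by
  have hdp' : B 0 0 + B 1 1 = B 0 1 + B 1 0 := hdp
  have hB' : ∃ i j, B i j ≠ ⊥ := by
    by_contra hc; push_neg at hc
    exact hz ((eq_zm_iff B).mpr hc)
  obtain ⟨i₀, j₀, h⟩ := hB'
  obtain ⟨r, hr⟩ := WithBot.ne_bot_iff_exists.mp h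
  have key : ∀ i j, B i j₀ + B i₀ j = B i j + ↑r := by
    intro i j
    fin_cases i₀ <;> fin_cases j₀ <;> fin_cases i <;> fin_cases j <;>
      simp only [Fin.zero_eta, Fin.mk_one, Fin.isValue] at hr ⊢ <;>
      rw [hr] <;>
      (try abel) <;> (abel_nf at hdp' ⊢) <;>
      first
        | rfl
        | exact hdp'
        | exact hdp'.symm
  refine ⟨(fun i _ => B i j₀ + ((-r : ℝ):Rb)), (fun _ j => B i₀ j), ?_⟩
  funext i j
  have lhs : tMul (tMul (fun i _ => B i j₀ + ((-r : ℝ):Rb)) Em) (fun _ j => B i₀ j) i j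
      = B i j₀ + ((-r : ℝ):Rb) + B i₀ j := by
    simp [tmul_apply, Em]
  rw [lhs]
  have e : B i j₀ + ((-r : ℝ):Rb) + B i₀ j = B i j₀ + B i₀ j + ((-r : ℝ):Rb) := by abel
  rw [e, key i j, add_assoc, ← WithBot.coe_add]
  norm_num

lemma norm2pos {A : Mat2} (a b c d : ℝ) (h00 : A 0 0 = ↑a) (h01 : A 0 1 = ↑b)
    (h10 : A 1 0 = ↑c) (h11 : A 1 1 = ↑d) : relJ A (Nm (a + d - (b + c))) := by
  constructor
  · refine ⟨Dml ↑a ↑c, Dml ((0:ℝ):Rb) ↑(b - a), ?_⟩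
    rw [diag_conj]
    funext i j
    fin_cases i <;> fin_cases j <;>
      simp [Nm, h00, h01, h10, h11] <;> norm_cast <;> ring
  · refine ⟨Dml ↑(-a) ↑(-c), Dml ((0:ℝ):Rb) ↑(a - b), ?_⟩
    rw [diag_conj]
    funext i j
    fin_cases i <;> fin_cases j <;>
      simp [Nm, h00, h01, h10, h11] <;> norm_cast <;> ring

lemma nm_neg_mem (t : ℝ) : Nm (-t) ∈ pIdeal (Nm t) := by
  refine ⟨Sw, Dml ((0:ℝ):Rb) ↑(-t), ?_⟩
  rw [dml_right, sw_left]
  funext i j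
  fin_cases i <;> fin_cases j <;> simp [Nm, Sw] <;> norm_cast <;> ring

lemma nm_rel_neg (t : ℝ) : relJ (Nm (-t)) (Nm t) := by
  constructor
  · exact nm_neg_mem t
  · have := nm_neg_mem (-t)
    rwa [neg_neg] at this

lemma norm2 {A : Mat2} (h2 : cls A = 2) : relJ A (Nm (lenR A)) := by
  obtain ⟨hdp, hf⟩ := (cls_eq_two_iff A).mp h2
  obtain ⟨a, ha⟩ := WithBot.ne_bot_iff_exists.mp (hf 0 0)
  obtain ⟨b, hb⟩ := WithBot.ne_bot_iff_exists.mp (hf 0 1)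
  obtain ⟨c, hc⟩ := WithBot.ne_bot_iff_exists.mp (hf 1 0)
  obtain ⟨d, hd⟩ := WithBot.ne_bot_iff_exists.mp (hf 1 1)
  have hDgA : Dg A = ((a + d : ℝ) : Rb) := by
    rw [Dg, ← ha, ← hd]; push_cast; ring
  have hPmA : Pm A = ((b + c : ℝ) : Rb) := by
    rw [Pm, ← hb, ← hc]; push_cast; ring
  have hlen : lenR A = |a + d - (b + c)| := by
    rw [lenR, hDgA, hPmA]; norm_cast
  have hne : a + d ≠ b + c := by
    intro hh; apply hdp; rw [hDgA, hPmA, hh]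
  rcases lt_or_gt_of_ne hne with hlt | hgt
  · have : lenR A = -(a + d - (b + c)) := by
      rw [hlen, abs_of_neg (by linarith)]
    have h1 := norm2pos a b c d ha.symm hb.symm hc.symm hd.symm
    rw [show a + d - (b + c) = -(lenR A) by rw [this]; ring] at h1
    exact relJ_trans h1 (nm_rel_neg (lenR A))
  · have : lenR A = a + d - (b + c) := by
      rw [hlen, abs_of_pos (by linarith)]
    rw [this]
    exact norm2pos a b c d ha.symm hb.symm hc.symm hd.symm

lemma nm_le {ℓ' ℓ : ℝ} (h0 : 0 ≤ ℓ') (h : ℓ' ≤ ℓ) : Nm ℓ' ∈ pIdeal (Nm ℓ) := by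
  refine ⟨Idm, (fun k j => if k = 0 then ((0:ℝ):Rb) else if j = 1 then ((ℓ' - ℓ : ℝ):Rb) else ⊥), ?_⟩
  rw [tmul_idm_left]
  funext i j
  fin_cases i <;> fin_cases j <;> simp [tmul_apply, Nm]
  · exact h
  · rw [← WithBot.coe_add, ← WithBot.coe_zero, ← WithBot.coe_sup]
    norm_cast
    rw [max_eq_right (by linarith)]
    ring

/-- The auxiliary matrix `[[0,0],[-ℓ,0]]`. -/
noncomputable def Bm (ℓ : ℝ) : Mat2 := fun i j => if i = 1 ∧ j = 0 then ((-ℓ : ℝ):Rb) else ((0:ℝ):Rb)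

lemma bm_mem_ninf {ℓ : ℝ} (hl : 0 ≤ ℓ) : Bm ℓ ∈ pIdeal Ninf := by
  refine ⟨Idm, Bm ℓ, ?_⟩
  rw [tmul_idm_left]
  funext i j
  fin_cases i <;> fin_cases j <;> simp [tmul_apply, Ninf, Bm]
  exact hl

lemma cls_bm {ℓ : ℝ} (h : 0 < ℓ) : cls (Bm ℓ) = 2 := by
  rw [cls_eq_two_iff]
  constructor
  · show Bm ℓ 0 0 + Bm ℓ 1 1 ≠ Bm ℓ 0 1 + Bm ℓ 1 0
    have e1 : Bm ℓ 0 0 + Bm ℓ 1 1 = ((0:ℝ):Rb) := by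
      norm_num [Bm, ← WithBot.coe_add]
    have e2 : Bm ℓ 0 1 + Bm ℓ 1 0 = ((-ℓ:ℝ):Rb) := by
      norm_num [Bm, ← WithBot.coe_add]
    rw [e1, e2]
    intro hh
    have : (0:ℝ) = -ℓ := by exact_mod_cast hh
    linarith
  · intro i j
    unfold Bm
    split_ifs <;> exact WithBot.coe_ne_bot

lemma lenR_bm {ℓ : ℝ} (h : 0 < ℓ) : lenR (Bm ℓ) = ℓ := by
  have hD : Dg (Bm ℓ) = ((0:ℝ):Rb) := by
    show Bm ℓ 0 0 + Bm ℓ 1 1 = _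
    simp [Bm]
  have hP : Pm (Bm ℓ) = ((-ℓ:ℝ):Rb) := by
    show Bm ℓ 0 1 + Bm ℓ 1 0 = _
    simp [Bm, ← WithBot.coe_add]
  rw [lenR, hD, hP]
  simp
  linarith

lemma nm_mem_ninf {ℓ : ℝ} (h : 0 < ℓ) : Nm ℓ ∈ pIdeal Ninf := by
  have h1 : relJ (Bm ℓ) (Nm ℓ) := by
    have := norm2 (cls_bm h)
    rwa [lenR_bm h] at this
  exact pIdeal_trans h1.2 (bm_mem_ninf (le_of_lt h))

lemma norm3c {A : Mat2} (a b d : ℝ) (h00 : A 0 0 = ↑a) (h01 : A 0 1 = ↑b)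
    (h10 : A 1 0 = ⊥) (h11 : A 1 1 = ↑d) : relJ A Ninf := by
  constructor
  · refine ⟨Dml ↑a ↑(a - b + d), Dml ((0:ℝ):Rb) ↑(b - a), ?_⟩
    rw [diag_conj]
    funext i j
    fin_cases i <;> fin_cases j <;>
      simp [Ninf, h00, h01, h10, h11] <;> norm_cast <;> ring
  · refine ⟨Dml ↑(-a) ↑(b - a - d), Dml ((0:ℝ):Rb) ↑(a - b), ?_⟩
    rw [diag_conj]
    funext i j
    fin_cases i <;> fin_cases j <;>
      simp [Ninf, h00, h01, h10, h11] <;> norm_cast <;> ring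

lemma norm4c {A : Mat2} (a d : ℝ) (h00 : A 0 0 = ↑a) (h01 : A 0 1 = ⊥)
    (h10 : A 1 0 = ⊥) (h11 : A 1 1 = ↑d) : relJ A Idm := by
  constructor
  · refine ⟨Dml ↑a ↑d, Idm, ?_⟩
    rw [tmul_idm_right, dml_left]
    funext i j
    fin_cases i <;> fin_cases j <;>
      simp [Idm, h00, h01, h10, h11]
  · refine ⟨Dml ↑(-a) ↑(-d), Idm, ?_⟩
    rw [tmul_idm_right, dml_left]
    funext i j
    fin_cases i <;> fin_cases j <;>
      simp [Idm, h00, h01, h10, h11] <;> norm_cast <;> ring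

lemma norm3 {A : Mat2} (h3 : cls A = 3) : relJ A Ninf := by
  obtain ⟨hdp, hnf, hnp⟩ := (cls_eq_three_iff A).mp h3
  push_neg at hnf
  obtain ⟨i₀, j₀, hb⟩ := hnf
  have hrowne : ∀ i, A i 0 = ⊥ → A i 1 = ⊥ → False := by
    intro i h1 h2
    have hall : ∀ j, A i j = ⊥ := by intro j; fin_cases j; exacts [h1, h2]
    have := DgPm_of_row_bot A i hall
    exact hdp (this.1.trans this.2.symm)
  have hcolne : ∀ j, A 0 j = ⊥ → A 1 j = ⊥ → False := by
    intro j h1 h2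
    have hall : ∀ i, A i j = ⊥ := by intro i; fin_cases i; exacts [h1, h2]
    have := DgPm_of_col_bot A j hall
    exact hdp (this.1.trans this.2.symm)
  fin_cases i₀ <;> fin_cases j₀ <;> simp only [Fin.zero_eta, Fin.mk_one, Fin.isValue] at hb
  · -- ⊥ at (0,0) : use B = Sw ⊗ A
    have h01 : A 0 1 ≠ ⊥ := fun h => hrowne 0 hb h
    have h10 : A 1 0 ≠ ⊥ := fun h => hcolne 0 hb h
    have h11 : A 1 1 ≠ ⊥ := fun h => hnp (Or.inl ⟨hb, h⟩)
    obtain ⟨b, hbv⟩ := WithBot.ne_bot_iff_exists.mp h01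
    obtain ⟨c, hcv⟩ := WithBot.ne_bot_iff_exists.mp h10
    obtain ⟨d, hdv⟩ := WithBot.ne_bot_iff_exists.mp h11
    have hrel : relJ (tMul Sw A) Ninf := by
      refine norm3c c d b ?_ ?_ ?_ ?_ <;> simp [sw_left, ← hbv, ← hcv, ← hdv, hb]
    exact relJ_trans (relJ_symm (relJ_sw_left A)) hrel
  · -- ⊥ at (0,1) : use B = Sw ⊗ A ⊗ Sw
    have h00 : A 0 0 ≠ ⊥ := fun h => hrowne 0 h hb
    have h11 : A 1 1 ≠ ⊥ := fun h => hcolne 1 hb h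
    have h10 : A 1 0 ≠ ⊥ := fun h => hnp (Or.inr ⟨hb, h⟩)
    obtain ⟨a, hav⟩ := WithBot.ne_bot_iff_exists.mp h00
    obtain ⟨c, hcv⟩ := WithBot.ne_bot_iff_exists.mp h10
    obtain ⟨d, hdv⟩ := WithBot.ne_bot_iff_exists.mp h11
    have hrel : relJ (tMul (tMul Sw A) Sw) Ninf := by
      refine norm3c d c a ?_ ?_ ?_ ?_ <;>
        simp [sw_right, sw_left, ← hav, ← hcv, ← hdv, hb]
    exact relJ_trans (relJ_symm (relJ_trans (relJ_sw_right (tMul Sw A)) (relJ_sw_left A))) hrel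
  · -- ⊥ at (1,0) : canonical
    have h00 : A 0 0 ≠ ⊥ := fun h => hcolne 0 h hb
    have h11 : A 1 1 ≠ ⊥ := fun h => hrowne 1 hb h
    have h01 : A 0 1 ≠ ⊥ := fun h => hnp (Or.inr ⟨h, hb⟩)
    obtain ⟨a, hav⟩ := WithBot.ne_bot_iff_exists.mp h00
    obtain ⟨b, hbv⟩ := WithBot.ne_bot_iff_exists.mp h01
    obtain ⟨d, hdv⟩ := WithBot.ne_bot_iff_exists.mp h11
    exact norm3c a b d hav.symm hbv.symm hb hdv.symm
  · -- ⊥ at (1,1) : use B = A ⊗ Sw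
    have h10 : A 1 0 ≠ ⊥ := fun h => hrowne 1 h hb
    have h01 : A 0 1 ≠ ⊥ := fun h => hcolne 1 h hb
    have h00 : A 0 0 ≠ ⊥ := fun h => hnp (Or.inl ⟨h, hb⟩)
    obtain ⟨a, hav⟩ := WithBot.ne_bot_iff_exists.mp h00
    obtain ⟨b, hbv⟩ := WithBot.ne_bot_iff_exists.mp h01
    obtain ⟨c, hcv⟩ := WithBot.ne_bot_iff_exists.mp h10
    have hrel : relJ (tMul A Sw) Ninf := by
      refine norm3c b a c ?_ ?_ ?_ ?_ <;> simp [sw_right, ← hav, ← hbv, ← hcv, hb]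
    exact relJ_trans (relJ_symm (relJ_sw_right A)) hrel

lemma norm4 {A : Mat2} (h4 : cls A = 4) : relJ A Idm := by
  obtain ⟨hdp, hp⟩ := (cls_eq_four_iff A).mp h4
  rcases hp with ⟨h1, h2⟩ | ⟨h1, h2⟩
  · -- antidiagonal-bot : A = diag with ⊥ at (0,0) and (1,1); use B = Sw ⊗ A
    have h01 : A 0 1 ≠ ⊥ := by
      intro h
      apply hdp
      show A 0 0 + A 1 1 = A 0 1 + A 1 0
      simp [h1, h2, h]
    have h10 : A 1 0 ≠ ⊥ := by
      intro h
      apply hdp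
      show A 0 0 + A 1 1 = A 0 1 + A 1 0
      simp [h1, h2, h]
    obtain ⟨b, hbv⟩ := WithBot.ne_bot_iff_exists.mp h01
    obtain ⟨c, hcv⟩ := WithBot.ne_bot_iff_exists.mp h10
    have hrel : relJ (tMul Sw A) Idm := by
      refine norm4c c b ?_ ?_ ?_ ?_ <;> simp [sw_left, ← hbv, ← hcv, h1, h2]
    exact relJ_trans (relJ_symm (relJ_sw_left A)) hrel
  · -- diagonal, canonical
    have h00 : A 0 0 ≠ ⊥ := by
      intro h
      apply hdp
      show A 0 0 + A 1 1 = A 0 1 + A 1 0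
      simp [h1, h2, h]
    have h11 : A 1 1 ≠ ⊥ := by
      intro h
      apply hdp
      show A 0 0 + A 1 1 = A 0 1 + A 1 0
      simp [h1, h2, h]
    obtain ⟨a, hav⟩ := WithBot.ne_bot_iff_exists.mp h00
    obtain ⟨d, hdv⟩ := WithBot.ne_bot_iff_exists.mp h11
    exact norm4c a d hav.symm h1 h2 hdv.symm

lemma lenR_nonneg (A : Mat2) : 0 ≤ lenR A := abs_nonneg _

lemma lenR_pos {A : Mat2} (h2 : cls A = 2) : 0 < lenR A := by
  obtain ⟨hdp, hf⟩ := (cls_eq_two_iff A).mp h2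
  obtain ⟨a, ha⟩ := WithBot.ne_bot_iff_exists.mp (hf 0 0)
  obtain ⟨b, hb⟩ := WithBot.ne_bot_iff_exists.mp (hf 0 1)
  obtain ⟨c, hc⟩ := WithBot.ne_bot_iff_exists.mp (hf 1 0)
  obtain ⟨d, hd⟩ := WithBot.ne_bot_iff_exists.mp (hf 1 1)
  have hDgA : Dg A = ((a + d : ℝ) : Rb) := by
    rw [Dg, ← ha, ← hd]; push_cast; ring
  have hPmA : Pm A = ((b + c : ℝ) : Rb) := by
    rw [Pm, ← hb, ← hc]; push_cast; ring
  have hlen : lenR A = |a + d - (b + c)| := by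
    rw [lenR, hDgA, hPmA]; norm_cast
  have hne : a + d ≠ b + c := by
    intro hh; exact hdp (by rw [hDgA, hPmA, hh])
  rw [hlen]
  exact abs_pos.mpr (by intro hh; exact hne (by linarith))

lemma lenE_pos {A : Mat2} (h2 : cls A = 2) : 0 < lenE A :=
  ENNReal.ofReal_pos.mpr (lenR_pos h2)

lemma lenE_ne_top (A : Mat2) : lenE A ≠ ⊤ := ENNReal.ofReal_ne_top

lemma lenE_nm {t : ℝ} (h : 0 < t) : lenE (Nm t) = ENNReal.ofReal t := by
  rw [lenE, lenR_nm, abs_of_pos h]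

lemma cls_eq_one_parts {B : Mat2} (h1 : cls B = 1) : B ≠ Zm ∧ Dg B = Pm B := by
  have h0 : B ≠ Zm := by
    intro h; rw [h, cls_zm] at h1; omega
  have := (cls_le_one_iff B).mp (le_of_eq h1)
  exact ⟨h0, this.resolve_left h0⟩

lemma constr {B A : Mat2}
    (h : cls B < cls A ∨ (cls B = cls A ∧ (cls B = 2 → lenE B ≤ lenE A))) :
    B ∈ pIdeal A := by
  have hA4 := cls_le_four A
  have hB4 := cls_le_four B
  have hAne : cls A ≥ 1 → A ≠ Zm := by
    intro hge h'
    rw [h', cls_zm] at hge; omega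
  by_cases b0 : cls B = 0
  · rw [(cls_eq_zero_iff B).mp b0]; exact bot_mem_pIdeal A
  by_cases b1 : cls B = 1
  · obtain ⟨hz, hdp⟩ := cls_eq_one_parts b1
    have hA : A ≠ Zm := hAne (by omega)
    exact pIdeal_trans (cls1_mem_em hz hdp) (em_mem hA)
  by_cases b2 : cls B = 2
  · have hBrel := norm2 b2
    by_cases a2 : cls A = 2
    · have hle : lenE B ≤ lenE A := by
        rcases h with h | h
        · omega
        · exact h.2 b2
      have hlR : lenR B ≤ lenR A :=
        (ENNReal.ofReal_le_ofReal_iff (lenR_nonneg A)).mp hle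
      exact pIdeal_trans hBrel.1
        (pIdeal_trans (nm_le (lenR_pos b2).le hlR) (norm2 a2).2)
    · by_cases a3 : cls A = 3
      · exact pIdeal_trans hBrel.1
          (pIdeal_trans (nm_mem_ninf (lenR_pos b2)) (norm3 a3).2)
      · have a4 : cls A = 4 := by omega
        exact pIdeal_trans (mem_pIdeal_idm B) (norm4 a4).2
  by_cases b3 : cls B = 3
  · by_cases a3 : cls A = 3
    · exact pIdeal_trans (norm3 b3).1 (norm3 a3).2
    · have a4 : cls A = 4 := by omega
      exact pIdeal_trans (mem_pIdeal_idm B) (norm4 a4).2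
  · have b4 : cls B = 4 := by omega
    have a4 : cls A = 4 := by omega
    exact pIdeal_trans (norm4 b4).1 (norm4 a4).2

lemma leJ_iff_mem {B A : Mat2} : leJ B A ↔ B ∈ pIdeal A := Iff.rfl

lemma relJ_iff {B A : Mat2} :
    relJ B A ↔ (cls B = cls A ∧ (cls B = 2 → lenE B = lenE A)) := by
  constructor
  · intro h
    have h1 := mono (leJ_iff_mem.mp h.1)
    have h2 := mono (leJ_iff_mem.mp h.2)
    have hc : cls B = cls A := le_antisymm h1.1 h2.1
    refine ⟨hc, fun hb2 => ?_⟩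
    have ha2 : cls A = 2 := by omega
    exact le_antisymm (h1.2 ha2 hb2) (h2.2 hb2 ha2)
  · intro ⟨hc, hl⟩
    constructor
    · exact leJ_iff_mem.mpr (constr (Or.inr ⟨hc, fun hb2 => (hl hb2).le⟩))
    · refine leJ_iff_mem.mpr (constr (Or.inr ⟨hc.symm, fun ha2 => ?_⟩))
      have hb2 : cls B = 2 := by omega
      exact (hl hb2).ge

theorem main_thm (I : Set Mat2) (hI : IsIdeal I) :
    (∃ A : Mat2, I = pIdeal A) ∨
    (∃ A : Mat2, I = pIdeal A \ {B : Mat2 | relJ B A}) := by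
  obtain ⟨⟨A₀, hA₀⟩, hcl⟩ := hI
  have hsub : ∀ {B A : Mat2}, A ∈ I → B ∈ pIdeal A → B ∈ I := by
    rintro B A hA ⟨X, Y, rfl⟩; exact hcl A hA X Y
  by_cases h4 : ∃ A ∈ I, cls A = 4
  · obtain ⟨A, hAI, hA4⟩ := h4
    left
    refine ⟨A, Set.ext fun B => ⟨fun hB => ?_, fun hB => hsub hAI hB⟩⟩
    have hb := cls_le_four B
    by_cases hb4 : cls B = 4
    · exact constr (Or.inr ⟨by omega, fun h2 => by omega⟩)
    · exact constr (Or.inl (by omega))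
  by_cases h3 : ∃ A ∈ I, cls A = 3
  · obtain ⟨A, hAI, hA3⟩ := h3
    left
    refine ⟨A, Set.ext fun B => ⟨fun hB => ?_, fun hB => hsub hAI hB⟩⟩
    have hb := cls_le_four B
    have hb4 : cls B ≠ 4 := fun h => h4 ⟨B, hB, h⟩
    by_cases hb3 : cls B = 3
    · exact constr (Or.inr ⟨by omega, fun h2 => by omega⟩)
    · exact constr (Or.inl (by omega))
  by_cases h2 : ∃ A ∈ I, cls A = 2
  · obtain ⟨A₂, hA₂I, hA₂⟩ := h2
    set S : Set ℝ≥0∞ := {x | ∃ A ∈ I, cls A = 2 ∧ lenE A = x} with hSdef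
    have hS0 : lenE A₂ ∈ S := ⟨A₂, hA₂I, hA₂, rfl⟩
    set L := sSup S with hLdef
    have hL_pos : 0 < L := lt_of_lt_of_le (lenE_pos hA₂) (le_sSup hS0)
    have hcls_le : ∀ B ∈ I, cls B ≤ 2 := by
      intro B hB
      have hb4 : cls B ≠ 4 := fun h => h4 ⟨B, hB, h⟩
      have hb3 : cls B ≠ 3 := fun h => h3 ⟨B, hB, h⟩
      have := cls_le_four B
      omega
    have hlow : ∀ {B : Mat2}, cls B ≤ 1 → B ∈ I := by
      intro B hble
      exact hsub hA₂I (constr (Or.inl (by omega)))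
    by_cases hat : L ∈ S
    · obtain ⟨A, hAI, hA2, hlen⟩ := hat
      left
      refine ⟨A, Set.ext fun B => ⟨fun hB => ?_, fun hB => hsub hAI hB⟩⟩
      have hb := hcls_le B hB
      by_cases hb2 : cls B = 2
      · refine constr (Or.inr ⟨by omega, fun _ => ?_⟩)
        rw [hlen]
        exact le_sSup ⟨B, hB, hb2, rfl⟩
      · exact constr (Or.inl (by omega))
    · right
      by_cases htop : L = ⊤
      · refine ⟨Ninf, Set.ext fun B => ⟨fun hB => ⟨?_, ?_⟩, fun hB => ?_⟩⟩
        · exact constr (Or.inl (by have := hcls_le B hB; rw [cls_ninf]; omega))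
        · intro hrel
          have hc := (relJ_iff.mp hrel).1
          rw [cls_ninf] at hc
          have := hcls_le B hB
          omega
        · obtain ⟨hp, hnj⟩ := hB
          have hble : cls B ≤ 3 := by
            have := (mono hp).1; rwa [cls_ninf] at this
          have hb3 : cls B ≠ 3 := fun hb3 => hnj (norm3 hb3)
          by_cases hb2 : cls B = 2
          · have hlt : lenE B < L := by
              rw [htop]
              exact lt_of_le_of_ne le_top (lenE_ne_top B)
            obtain ⟨s, hsS, hs⟩ := (lt_sSup_iff).mp hlt
            obtain ⟨A', hA'I, hA'2, rfl⟩ := hsS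
            exact hsub hA'I (constr (Or.inr ⟨by omega, fun _ => hs.le⟩))
          · exact hlow (by omega)
      · have ht : 0 < L.toReal := ENNReal.toReal_pos (ne_of_gt hL_pos) htop
        have hNm2 : cls (Nm L.toReal) = 2 := cls_nm ht
        have hNmlen : lenE (Nm L.toReal) = L := by
          rw [lenE_nm ht, ENNReal.ofReal_toReal htop]
        refine ⟨Nm L.toReal, Set.ext fun B => ⟨fun hB => ⟨?_, ?_⟩, fun hB => ?_⟩⟩
        · have hb := hcls_le B hB
          by_cases hb2 : cls B = 2
          · refine constr (Or.inr ⟨by omega, fun _ => ?_⟩)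
            rw [hNmlen]
            exact le_sSup ⟨B, hB, hb2, rfl⟩
          · exact constr (Or.inl (by omega))
        · intro hrel
          have hc := (relJ_iff.mp hrel).1
          rw [hNm2] at hc
          have hl := (relJ_iff.mp hrel).2 hc
          rw [hNmlen] at hl
          exact hat ⟨B, hB, hc, hl⟩
        · obtain ⟨hp, hnj⟩ := hB
          have hm := mono hp
          have hble : cls B ≤ 2 := by have := hm.1; omega
          by_cases hb2 : cls B = 2
          · have hle : lenE B ≤ L := by
              have := hm.2 hNm2 hb2; rwa [hNmlen] at this
            have hne : lenE B ≠ L := by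
              intro he
              exact hnj (relJ_iff.mpr ⟨by omega, fun _ => by rw [he, hNmlen]⟩)
            obtain ⟨s, hsS, hs⟩ := (lt_sSup_iff).mp (lt_of_le_of_ne hle hne)
            obtain ⟨A', hA'I, hA'2, rfl⟩ := hsS
            exact hsub hA'I (constr (Or.inr ⟨by omega, fun _ => hs.le⟩))
          · exact hlow (by omega)
  by_cases h1 : ∃ A ∈ I, cls A = 1
  · obtain ⟨A, hAI, hA1⟩ := h1
    left
    refine ⟨A, Set.ext fun B => ⟨fun hB => ?_, fun hB => hsub hAI hB⟩⟩
    have hb4 : cls B ≠ 4 := fun h => h4 ⟨B, hB, h⟩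
    have hb3 : cls B ≠ 3 := fun h => h3 ⟨B, hB, h⟩
    have hb2 : cls B ≠ 2 := fun h => h2 ⟨B, hB, h⟩
    have hb := cls_le_four B
    by_cases hb1 : cls B = 1
    · exact constr (Or.inr ⟨by omega, fun h => by omega⟩)
    · exact constr (Or.inl (by omega))
  · left
    have hZI : Zm ∈ I := hsub hA₀ (bot_mem_pIdeal A₀)
    refine ⟨Zm, Set.ext fun B => ⟨fun hB => ?_, fun hB => ?_⟩⟩
    · have hb4 : cls B ≠ 4 := fun h => h4 ⟨B, hB, h⟩
      have hb3 : cls B ≠ 3 := fun h => h3 ⟨B, hB, h⟩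
      have hb2 : cls B ≠ 2 := fun h => h2 ⟨B, hB, h⟩
      have hb1 : cls B ≠ 1 := fun h => h1 ⟨B, hB, h⟩
      have hb := cls_le_four B
      have hb0 : cls B = 0 := by omega
      rw [(cls_eq_zero_iff B).mp hb0]
      exact bot_mem_pIdeal Zm
    · obtain ⟨X, Y, rfl⟩ := hB
      rw [tmul_zm_right, tmul_zm_left]
      exact hZI

end Trop

/-- every ideal of `M₂(ℝ̄)` is either principal or the difference between a
principal ideal and the `𝓙`-class of its generator. -/
theorem ideal_principal_or_principal_minus_Jclass (I : Set Mat2) (hI : IsIdeal I) :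
    (∃ A : Mat2, I = pIdeal A) ∨
    (∃ A : Mat2, I = pIdeal A \ {B : Mat2 | relJ B A}) :=
  Trop.main_thm I hI
end
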